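/- arXiv:cs/0701097 — 5 statements merged into one kernel-verified Lean document; each statement's English description precedes it below -/
import Mathlib

section
/- Let a(x,y;m) = x + (q^m−1)y, a homogeneous polynomial of degree 1 with coefficients a_0(m) = 1 and a_1(m) = q^m−1. For every l ≥ 0, the coefficient of y^u x^{l−u} in the l-th q-power a(x,y;m)^{[l]} equals [l,u]_q · α(m,u) for all 0 ≤ u ≤ l; that is, [x+(q^m−1)y]^{[l]} = Σ_{u=0}^{l} [l,u]_q α(m,u) y^u x^{l−u}. -/
open Finset

/-- `α(m,u) = ∏_{i=0}^{u-1} (q^m - q^i)`, with `q^m` the real power (integer exponent `m`). -/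
noncomputable def alphaR (q : ℝ) (m : ℤ) (u : ℕ) : ℝ :=
  ∏ i ∈ Finset.range u, (q ^ m - q ^ (i : ℤ))

/-- Gaussian binomial `[n,u]_q = α(n,u)/α(u,u)` (which is `0` when `u > n`). -/
noncomputable def gaussR (q : ℝ) (n u : ℕ) : ℝ :=
  alphaR q n u / alphaR q u u

/-- A homogeneous polynomial in `x,y` with integer parameter `m` is modelled by its
family of coefficients `f m i` (the coefficient of `y^i x^{deg - i}`).
The `q`-product of `f` (degree `r`) and `g` (degree `s`) has coefficients
`c_u(m) = Σ_{i=0}^u q^{i·s} f_i(m) g_{u-i}(m-i)`. -/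
noncomputable def qmulCoeff (q : ℝ) (s : ℕ) (f g : ℤ → ℕ → ℝ) : ℤ → ℕ → ℝ :=
  fun m u => ∑ i ∈ Finset.range (u + 1), q ^ (i * s) * f m i * g (m - i) (u - i)

/-- The `l`-th `q`-power of a degree-1 homogeneous polynomial `a`:
`a^{[0]} = 1` and `a^{[l]} = a^{[l-1]} * a`. -/
noncomputable def qpowCoeff (q : ℝ) (a : ℤ → ℕ → ℝ) : ℕ → ℤ → ℕ → ℝ
  | 0 => fun _ u => if u = 0 then 1 else 0
  | l + 1 => qmulCoeff q 1 (qpowCoeff q a l) a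

noncomputable def betaR (q : ℝ) (m : ℤ) (u : ℕ) : ℝ :=
  ∏ i ∈ Finset.range u, (q ^ (m - i) - 1)

lemma alphaR_eq (q : ℝ) (hq : 0 < q) (m : ℤ) (u : ℕ) :
    alphaR q m u = (∏ i ∈ range u, q ^ (i : ℤ)) * betaR q m u := by
  rw [alphaR, betaR, ← prod_mul_distrib]
  refine prod_congr rfl fun i _ => ?_
  have h : q ^ m = q ^ (i : ℤ) * q ^ (m - i) := by
    rw [← zpow_add₀ (ne_of_gt hq)]; ring_nf
  rw [h]; ring

lemma gaussR_eq (q : ℝ) (hq : 0 < q) (n u : ℕ) :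
    gaussR q n u = betaR q n u / betaR q u u := by
  rw [gaussR, alphaR_eq q hq, alphaR_eq q hq, mul_div_mul_left]
  exact prod_ne_zero_iff.2 fun i _ => zpow_ne_zero _ (ne_of_gt hq)

lemma betaR_pos (q : ℝ) (hq : 1 < q) (u : ℕ) : 0 < betaR q u u := by
  refine prod_pos fun i hi => ?_
  rw [mem_range] at hi
  have : (1:ℝ) < q ^ ((u : ℤ) - i) :=
    one_lt_zpow₀ hq (by omega)
  linarith

lemma betaR_succ (q : ℝ) (n : ℤ) (u : ℕ) :
    betaR q n (u + 1) = betaR q (n - 1) u * (q ^ n - 1) := by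
  rw [betaR, prod_range_succ', betaR]
  congr 1
  · refine prod_congr rfl fun i _ => ?_
    congr 2
    push_cast; ring
  · norm_num

lemma gauss_pascal (q : ℝ) (hq : 1 < q) (l u : ℕ) :
    gaussR q (l + 1) (u + 1) = q ^ (u + 1) * gaussR q l (u + 1) + gaussR q l u := by
  have hq0 : 0 < q := lt_trans one_pos hq
  rw [gaussR_eq q hq0, gaussR_eq q hq0, gaussR_eq q hq0]
  have h1 : betaR q (l + 1 : ℕ) (u + 1) = betaR q l u * (q ^ ((l : ℤ) + 1) - 1) := by
    have := betaR_succ q (l + 1 : ℕ) u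
    rw [this]; norm_num
  have h2 : betaR q (u + 1 : ℕ) (u + 1) = betaR q u u * (q ^ ((u : ℤ) + 1) - 1) := by
    have := betaR_succ q (u + 1 : ℕ) u
    rw [this]; norm_num
  have h3 : betaR q l (u + 1) = betaR q l u * (q ^ ((l : ℤ) - u) - 1) := by
    rw [betaR, prod_range_succ, betaR]
  rw [h1, h2, h3]
  have hB : betaR q u u ≠ 0 := ne_of_gt (betaR_pos q hq u)
  have hD : q ^ ((u : ℤ) + 1) - 1 ≠ 0 := by
    have : (1:ℝ) < q ^ ((u : ℤ) + 1) := one_lt_zpow₀ hq (by omega)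
    linarith
  have hqn : q ≠ 0 := ne_of_gt hq0
  have key : q ^ ((l : ℤ) + 1) = q ^ ((u : ℤ) + 1) * q ^ ((l : ℤ) - u) := by
    rw [← zpow_add₀ hqn]; ring_nf
  have hpow : (q : ℝ) ^ (u + 1) = q ^ ((u : ℤ) + 1) := by
    rw [← zpow_natCast]; push_cast; ring_nf
  rw [hpow]
  field_simp
  rw [key]; ring

lemma alphaR_zero (q : ℝ) (m : ℤ) : alphaR q m 0 = 1 := by simp [alphaR]

lemma gaussR_zero (q : ℝ) (n : ℕ) : gaussR q n 0 = 1 := by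
  simp [gaussR, alphaR_zero]

lemma gaussR_of_lt (q : ℝ) {n u : ℕ} (h : n < u) : gaussR q n u = 0 := by
  have : alphaR q n u = 0 := by
    rw [alphaR]
    exact prod_eq_zero (mem_range.2 h) (by simp)
  simp [gaussR, this]

lemma main_aux (q : ℝ) (hq : 1 < q) (m : ℤ) (l : ℕ) : ∀ u : ℕ,
    qpowCoeff q
        (fun m' i => if i = 0 then 1 else if i = 1 then q ^ m' - 1 else 0) l m u =
      gaussR q l u * alphaR q m u := by
  have hq0 : (q:ℝ) ≠ 0 := by positivity
  induction l with
  | zero =>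
    intro u
    cases u with
    | zero => simp [qpowCoeff, gaussR_zero, alphaR_zero]
    | succ v => simp [qpowCoeff, gaussR_of_lt q (Nat.succ_pos v)]
  | succ l ih =>
    intro u
    show qmulCoeff q 1 _ _ m u = _
    rw [qmulCoeff]
    cases u with
    | zero =>
      simp [ih 0, gaussR_zero, alphaR_zero]
    | succ v =>
      rw [show v + 1 + 1 = v + 2 from rfl, Finset.sum_range_succ, Finset.sum_range_succ]
      have hz : ∑ i ∈ Finset.range v, q ^ (i * 1) *
          (qpowCoeff q (fun m' i => if i = 0 then 1 else if i = 1 then q ^ m' - 1 else 0) l m i) *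
          ((fun (m' : ℤ) (j : ℕ) => if j = 0 then (1:ℝ) else if j = 1 then q ^ m' - 1 else 0)
            (m - i) (v + 1 - i)) = 0 := by
        refine Finset.sum_eq_zero fun i hi => ?_
        rw [mem_range] at hi
        have h1 : v + 1 - i ≠ 0 := by omega
        have h2 : v + 1 - i ≠ 1 := by omega
        simp [h1, h2]
      rw [hz, zero_add]
      simp only [ih v, ih (v + 1)]
      have e1 : v + 1 - v = 1 := by omega
      have e2 : v + 1 - (v + 1) = 0 := by omega
      rw [e1, e2]
      norm_num
      rw [gauss_pascal q hq l v]
      have ha : alphaR q m (v + 1) = alphaR q m v * (q ^ m - q ^ (v : ℤ)) := by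
        rw [alphaR, prod_range_succ, alphaR]
      have hk : (q : ℝ) ^ v * (q ^ (m - v) - 1) = q ^ m - q ^ (v : ℤ) := by
        rw [← zpow_natCast q v, mul_sub, mul_one, ← zpow_add₀ hq0]
        ring_nf
      linear_combination gaussR q l v * alphaR q m v * hk - gaussR q l v * ha


/-- the coefficient of `y^u x^{l-u}` in `[x + (q^m - 1)y]^{[l]}` equals
`[l,u]_q α(m,u)` for all `0 ≤ u ≤ l`. -/
theorem qpow_x_add_qm_sub_one_y (q : ℕ) (hq : 2 ≤ q) (m : ℤ) (l u : ℕ) (hu : u ≤ l) :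
    qpowCoeff (q : ℝ)
        (fun m' i => if i = 0 then 1 else if i = 1 then (q : ℝ) ^ m' - 1 else 0) l m u =
      gaussR (q : ℝ) l u * alphaR (q : ℝ) m u := by
  have : (1:ℝ) < q := by exact_mod_cast hq.trans_lt' one_lt_two
  exact main_aux (q : ℝ) this m l u
end

section
/- For 1 ≤ r ≤ m, let v ∈ GF(q^m)^r be any vector with rk(v) = r, and let A_{r,r} denote the number of vectors of rank r in the dual code ⟨v⟩^⊥ = {u ∈ GF(q^m)^r : Σ_{t=0}^{r−1} u_t v_t = 0}. Then A_{r,r} depends only on r (not on the choice of v), and the numbers A_{r,r} satisfy the recursion A_{r,r} = α(m,r−1) − q^{r−1} A_{r−1,r−1} for all 1 ≤ r ≤ m, where A_{0,0} = 1. -/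
open Finset

/-- The rank of a vector `v` over the subfield `K`: the dimension over `K` of the
`K`-linear span of the coordinates of `v`. -/
noncomputable def rk (K : Type*) {F : Type*} [Field K] [Field F] [Algebra K F]
    {ι : Type*} (v : ι → F) : ℕ :=
  Module.finrank K (Submodule.span K (Set.range v))

section Aux

variable {K F : Type*} [Field K] [Field F] [Algebra K F] [Fintype K] [Fintype F]

lemma rk_eq_iff_li {n : ℕ} (v : Fin n → F) : rk K v = n ↔ LinearIndependent K v := by
  rw [rk, linearIndependent_iff_card_eq_finrank_span, Set.finrank, Fintype.card_fin, eq_comm]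

lemma nat_card_sigma {ι : Type*} [Fintype ι] (T : ι → Type*) [∀ i, Finite (T i)] :
    Nat.card (Σ i, T i) = ∑ i, Nat.card (T i) := by
  letI : ∀ i, Fintype (T i) := fun i => Fintype.ofFinite _
  simp [Nat.card_eq_fintype_card, Fintype.card_sigma]

lemma nat_card_partition {α : Type*} [Finite α] (p q : α → Prop) :
    Nat.card {x // p x} =
      Nat.card {x // p x ∧ q x} + Nat.card {x // p x ∧ ¬ q x} := by
  classical
  rw [← Nat.card_sum]
  exact Nat.card_congr ((Equiv.sumCompl (fun y : {x // p x} => q y.1)).symm.trans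
    (Equiv.sumCongr (Equiv.subtypeSubtypeEquivSubtypeInter p q)
      (Equiv.subtypeSubtypeEquivSubtypeInter p (fun x => ¬ q x))))

/-- Cardinality of the span of a linearly independent `n`-tuple. -/
lemma card_span_li {n : ℕ} (u : Fin n → F) (hu : LinearIndependent K u) :
    Nat.card (Submodule.span K (Set.range u)) = Fintype.card K ^ n := by
  letI : Fintype (Submodule.span K (Set.range u)) := Fintype.ofFinite _
  rw [Nat.card_eq_fintype_card, Module.card_eq_pow_finrank (K := K)]
  congr 1
  rw [finrank_span_eq_card hu, Fintype.card_fin]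

/-- Number of linearly independent `n`-tuples. -/
lemma card_li (n : ℕ) :
    Nat.card {u : Fin n → F // LinearIndependent K u} =
      ∏ i ∈ range n, (Fintype.card F - Fintype.card K ^ i) := by
  classical
  induction n with
  | zero =>
    haveI : Unique {u : Fin 0 → F // LinearIndependent K u} :=
      ⟨⟨⟨default, linearIndependent_empty_type⟩⟩, by
        rintro ⟨a, ha⟩; ext i; exact i.elim0⟩
    simp [Nat.card_unique]
  | succ n ih =>
    have e : {u : Fin (n+1) → F // LinearIndependent K u} ≃
        Σ p : {u : Fin n → F // LinearIndependent K u},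
          {x : F // x ∉ Submodule.span K (Set.range p.1)} := by
      refine (Equiv.ofBijective
        (fun z : (Σ p : {u : Fin n → F // LinearIndependent K u},
          {x : F // x ∉ Submodule.span K (Set.range p.1)}) =>
          (⟨Fin.snoc z.1.1 z.2.1, linearIndependent_fin_snoc.mpr ⟨z.1.2, z.2.2⟩⟩ :
            {u : Fin (n+1) → F // LinearIndependent K u})) ⟨?_, ?_⟩).symm
      · rintro ⟨⟨p, hp⟩, x, hx⟩ ⟨⟨p', hp'⟩, x', hx'⟩ h
        simp only [Subtype.mk.injEq] at h
        have h1 : p = p' := by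
          funext i
          have := congrFun h i.castSucc
          simpa using this
        subst h1
        have h2 : (x : F) = x' := by
          have := congrFun h (Fin.last n)
          simpa using this
        exact Sigma.ext rfl (heq_of_eq (Subtype.ext h2))
      · rintro ⟨u, hu⟩
        have hu' : LinearIndependent K (Fin.init u) ∧
            u (Fin.last n) ∉ Submodule.span K (Set.range (Fin.init u)) := by
          rw [← linearIndependent_fin_snoc, Fin.snoc_init_self]; exact hu
        exact ⟨⟨⟨Fin.init u, hu'.1⟩, ⟨u (Fin.last n), hu'.2⟩⟩,
          Subtype.ext (Fin.snoc_init_self u)⟩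
    rw [Nat.card_congr e, nat_card_sigma, prod_range_succ, ← ih]
    have hterm : ∀ p : {u : Fin n → F // LinearIndependent K u},
        Nat.card {x : F // x ∉ Submodule.span K (Set.range p.1)} =
          Fintype.card F - Fintype.card K ^ n := by
      intro p
      letI : Fintype {x : F // x ∉ Submodule.span K (Set.range p.1)} := Fintype.ofFinite _
      letI : Fintype {x : F // x ∈ Submodule.span K (Set.range p.1)} := Fintype.ofFinite _
      rw [Nat.card_eq_fintype_card, Fintype.card_subtype_compl, ← card_span_li p.1 p.2]
      congr 1
      rw [Nat.card_eq_fintype_card]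
    rw [Finset.sum_congr rfl (fun p _ => hterm p), Finset.sum_const, card_univ,
      smul_eq_mul, ← Nat.card_eq_fintype_card]

lemma li_modify {n : ℕ} {v : Fin (n+1) → F} (hv : LinearIndependent K v) (c : Fin n → K) :
    LinearIndependent K (fun t : Fin n => v t.castSucc + c t • v (Fin.last n)) := by
  rw [Fintype.linearIndependent_iff]
  intro g hg i
  have expand : ∑ j : Fin (n+1), (Fin.snoc g (∑ t, g t * c t) : Fin (n+1) → K) j • v j
      = ∑ t, g t • (v t.castSucc + c t • v (Fin.last n)) := by
    rw [Fin.sum_univ_castSucc]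
    simp only [Fin.snoc_castSucc, Fin.snoc_last, smul_add, smul_smul,
      Finset.sum_add_distrib, Finset.sum_smul]
  have key : ∑ j : Fin (n+1), (Fin.snoc g (∑ t, g t * c t) : Fin (n+1) → K) j • v j = 0 := by
    rw [expand, hg]
  have h0 := Fintype.linearIndependent_iff.mp hv _ key i.castSucc
  simpa using h0

lemma count_eq {n : ℕ} (v : Fin (n+1) → F) (hv : LinearIndependent K v) :
    Nat.card {u : Fin (n+1) → F // (∑ t, u t * v t) = 0 ∧ LinearIndependent K u}
      + ∑ c : Fin n → K, Nat.card {u : Fin n → F //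
          (∑ t, u t * (v t.castSucc + c t • v (Fin.last n))) = 0 ∧ LinearIndependent K u}
      = ∏ i ∈ range n, (Fintype.card F - Fintype.card K ^ i) := by
  classical
  have li_init : ∀ {u : Fin (n+1) → F}, LinearIndependent K u →
      LinearIndependent K (Fin.init u) := by
    intro u h
    exact (linearIndependent_fin_snoc.mp (by rw [Fin.snoc_init_self]; exact h)).1
  have hlast : v (Fin.last n) ≠ 0 := hv.ne_zero _
  have hpart := nat_card_partition
    (fun u : Fin (n+1) → F => (∑ t, u t * v t) = 0 ∧ LinearIndependent K (Fin.init u))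
    (fun u => LinearIndependent K u)
  -- the "full-rank" part is the set in the statement
  have efull : {u : Fin (n+1) → F //
        ((∑ t, u t * v t) = 0 ∧ LinearIndependent K (Fin.init u)) ∧ LinearIndependent K u} ≃
      {u : Fin (n+1) → F // (∑ t, u t * v t) = 0 ∧ LinearIndependent K u} :=
    Equiv.subtypeEquivRight fun u => by
      constructor
      · rintro ⟨⟨h1, _⟩, h3⟩; exact ⟨h1, h3⟩
      · rintro ⟨h1, h3⟩; exact ⟨⟨h1, li_init h3⟩, h3⟩
  -- the whole set T is equivalent to linearly independent n-tuples
  have eT : {u : Fin (n+1) → F //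
        (∑ t, u t * v t) = 0 ∧ LinearIndependent K (Fin.init u)} ≃
      {p : Fin n → F // LinearIndependent K p} := by
    refine (Equiv.ofBijective (fun p : {p : Fin n → F // LinearIndependent K p} =>
      (⟨Fin.snoc p.1 (-(∑ t, p.1 t * v t.castSucc) / v (Fin.last n)), ?_, ?_⟩ :
        {u : Fin (n+1) → F //
          (∑ t, u t * v t) = 0 ∧ LinearIndependent K (Fin.init u)})) ⟨?_, ?_⟩).symm
    · rw [Fin.sum_univ_castSucc]
      simp only [Fin.snoc_castSucc, Fin.snoc_last]
      rw [div_mul_cancel₀ _ hlast]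
      ring
    · rw [Fin.init_snoc]; exact p.2
    · rintro ⟨p, hp⟩ ⟨p', hp'⟩ h
      simp only [Subtype.mk.injEq] at h
      apply Subtype.ext
      funext i
      have := congrFun h i.castSucc
      simpa using this
    · rintro ⟨u, hsum, hinit⟩
      refine ⟨⟨Fin.init u, hinit⟩, Subtype.ext ?_⟩
      have hs : (∑ t : Fin n, u t.castSucc * v t.castSucc) + u (Fin.last n) * v (Fin.last n)
          = 0 := by rw [Fin.sum_univ_castSucc] at hsum; exact hsum
      have hlasteq : -(∑ t : Fin n, u t.castSucc * v t.castSucc) / v (Fin.last n)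
          = u (Fin.last n) := by
        rw [div_eq_iff hlast]
        linear_combination -hs
      funext i
      refine Fin.lastCases ?_ ?_ i
      · simp only [Fin.snoc_last]
        exact hlasteq
      · intro j
        simp only [Fin.snoc_castSucc]
        rfl
  -- the degenerate part
  have edeg : {u : Fin (n+1) → F //
        ((∑ t, u t * v t) = 0 ∧ LinearIndependent K (Fin.init u)) ∧ ¬ LinearIndependent K u} ≃
      Σ c : Fin n → K, {p : Fin n → F //
        (∑ t, p t * (v t.castSucc + c t • v (Fin.last n))) = 0 ∧ LinearIndependent K p} := by
    refine (Equiv.ofBijective (fun z : (Σ c : Fin n → K, {p : Fin n → F //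
        (∑ t, p t * (v t.castSucc + c t • v (Fin.last n))) = 0 ∧ LinearIndependent K p}) =>
      (⟨Fin.snoc z.2.1 (∑ t, z.1 t • z.2.1 t), ⟨?_, ?_⟩, ?_⟩ :
        {u : Fin (n+1) → F //
          ((∑ t, u t * v t) = 0 ∧ LinearIndependent K (Fin.init u)) ∧
            ¬ LinearIndependent K u})) ⟨?_, ?_⟩).symm
    · rw [Fin.sum_univ_castSucc]
      simp only [Fin.snoc_castSucc, Fin.snoc_last]
      have step : (∑ t : Fin n, z.2.1 t * v t.castSucc) + (∑ t, z.1 t • z.2.1 t) * v (Fin.last n)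
          = ∑ t : Fin n, z.2.1 t * (v t.castSucc + z.1 t • v (Fin.last n)) := by
        rw [Finset.sum_mul, ← Finset.sum_add_distrib]
        apply Finset.sum_congr rfl
        intro t _
        rw [mul_add, mul_smul_comm, smul_mul_assoc]
      exact step.trans z.2.2.1
    · rw [Fin.init_snoc]; exact z.2.2.2
    · rw [linearIndependent_fin_snoc]
      rintro ⟨-, hmem⟩
      exact hmem (Submodule.mem_span_range_iff_exists_fun K |>.mpr ⟨z.1, rfl⟩)
    · rintro ⟨c, p, hp⟩ ⟨c', p', hp'⟩ h
      simp only [Subtype.mk.injEq] at h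
      have h1 : (p : Fin n → F) = p' := by
        funext i
        have := congrFun h i.castSucc
        simpa using this
      have hpp : (⟨p, hp⟩ : {p : Fin n → F //
          (∑ t, p t * (v t.castSucc + c t • v (Fin.last n))) = 0 ∧ LinearIndependent K p}).1
          = p := rfl
      have h2 : (∑ t, c t • p t) = ∑ t, c' t • p t := by
        have := congrFun h (Fin.last n)
        simp only [Fin.snoc_last] at this
        rw [this, h1]
      have hc : c = c' := by
        funext t
        have hz : ∑ t, (c t - c' t) • p t = 0 := by
          simp only [sub_smul, Finset.sum_sub_distrib, h2, sub_self]
        have := Fintype.linearIndependent_iff.mp hp.2 _ hz t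
        exact sub_eq_zero.mp this
      subst hc
      subst h1
      rfl
    · rintro ⟨u, ⟨hsum, hinit⟩, hnotli⟩
      have hmem : u (Fin.last n) ∈ Submodule.span K (Set.range (Fin.init u)) := by
        by_contra hmem
        exact hnotli (by
          rw [← Fin.snoc_init_self u]
          exact linearIndependent_fin_snoc.mpr ⟨hinit, hmem⟩)
      obtain ⟨c, hc⟩ := (Submodule.mem_span_range_iff_exists_fun K).mp hmem
      have hsum' : (∑ t : Fin n, Fin.init u t *
          (v t.castSucc + c t • v (Fin.last n))) = 0 := by
        have : (∑ t : Fin n, Fin.init u t * (v t.castSucc + c t • v (Fin.last n)))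
            = (∑ t : Fin n, u t.castSucc * v t.castSucc) +
              (∑ t : Fin n, c t • Fin.init u t) * v (Fin.last n) := by
          rw [Finset.sum_mul, ← Finset.sum_add_distrib]
          apply Finset.sum_congr rfl
          intro t _
          show Fin.init u t * (v t.castSucc + c t • v (Fin.last n))
            = u t.castSucc * v t.castSucc + c t • Fin.init u t * v (Fin.last n)
          rw [mul_add, mul_smul_comm, smul_mul_assoc]
          rfl
        rw [Fin.sum_univ_castSucc] at hsum
        rw [this, hc]
        exact hsum
      refine ⟨⟨c, ⟨Fin.init u, hsum', hinit⟩⟩, Subtype.ext ?_⟩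
      show Fin.snoc (Fin.init u) (∑ t, c t • Fin.init u t) = u
      rw [hc, Fin.snoc_init_self]
  rw [Nat.card_congr efull] at hpart
  rw [Nat.card_congr eT, card_li] at hpart
  rw [Nat.card_congr edeg, nat_card_sigma] at hpart
  exact hpart.symm

lemma indep_aux : ∀ n : ℕ, ∀ v w : Fin n → F,
    LinearIndependent K v → LinearIndependent K w →
    Nat.card {u : Fin n → F // (∑ t, u t * v t) = 0 ∧ LinearIndependent K u}
      = Nat.card {u : Fin n → F // (∑ t, u t * w t) = 0 ∧ LinearIndependent K u} := by
  intro n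
  induction n with
  | zero => intro v w _ _; rw [Subsingleton.elim v w]
  | succ n ih =>
    intro v w hv hw
    have h1 := count_eq v hv
    have h2 := count_eq w hw
    have h3 : (∑ c : Fin n → K, Nat.card {u : Fin n → F //
          (∑ t, u t * (v t.castSucc + c t • v (Fin.last n))) = 0 ∧ LinearIndependent K u})
        = ∑ c : Fin n → K, Nat.card {u : Fin n → F //
          (∑ t, u t * (w t.castSucc + c t • w (Fin.last n))) = 0 ∧ LinearIndependent K u} :=
      Finset.sum_congr rfl fun c _ => ih _ _ (li_modify hv c) (li_modify hw c)
    rw [h3] at h1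
    rw [← h2] at h1
    exact Nat.add_right_cancel h1

lemma recursion_aux {n : ℕ} (v : Fin (n+1) → F) (hv : LinearIndependent K v)
    (w : Fin n → F) (hw : LinearIndependent K w) :
    Nat.card {u : Fin (n+1) → F // (∑ t, u t * v t) = 0 ∧ LinearIndependent K u}
      + Fintype.card K ^ n *
        Nat.card {u : Fin n → F // (∑ t, u t * w t) = 0 ∧ LinearIndependent K u}
      = ∏ i ∈ range n, (Fintype.card F - Fintype.card K ^ i) := by
  have h1 := count_eq v hv
  have h3 : (∑ c : Fin n → K, Nat.card {u : Fin n → F //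
        (∑ t, u t * (v t.castSucc + c t • v (Fin.last n))) = 0 ∧ LinearIndependent K u})
      = Fintype.card K ^ n *
        Nat.card {u : Fin n → F // (∑ t, u t * w t) = 0 ∧ LinearIndependent K u} := by
    rw [Finset.sum_congr rfl fun c _ => indep_aux n _ w (li_modify hv c) hw,
      Finset.sum_const, card_univ, smul_eq_mul]
    congr 1
    rw [Fintype.card_pi, Finset.prod_const, card_univ, Fintype.card_fin]
  rw [h3] at h1
  exact h1

end Aux

/-- for `1 ≤ r ≤ m` and any `v ∈ GF(q^m)^r` of rank `r`, the number
`A_{r,r}` of vectors of rank `r` in `⟨v⟩^⊥` depends only on `r` and satisfies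
`A_{r,r} = α(m,r-1) - q^{r-1} A_{r-1,r-1}`, with `A_{0,0} = 1`
(the count for any vector `w` of rank `r-1` in `GF(q^m)^{r-1}`). -/
theorem rank_dual_vector_recursion (q m : ℕ) (hq : IsPrimePow q) (hm : 0 < m)
    (K F : Type*) [Field K] [Field F] [Algebra K F] [Fintype K] [Fintype F]
    (hK : Fintype.card K = q) (hF : Fintype.card F = q ^ m)
    (r : ℕ) (hr1 : 1 ≤ r) (hrm : r ≤ m)
    (v : Fin r → F) (hv : rk K v = r)
    (w : Fin (r - 1) → F) (hw : rk K w = r - 1) :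
    (Nat.card {u : Fin r → F // (∑ t, u t * v t) = 0 ∧ rk K u = r} : ℤ) =
      (∏ i ∈ Finset.range (r - 1), ((q : ℤ) ^ m - (q : ℤ) ^ i)) -
        (q : ℤ) ^ (r - 1) *
          (Nat.card {u : Fin (r - 1) → F // (∑ t, u t * w t) = 0 ∧ rk K u = r - 1} : ℤ) := by
  obtain ⟨s, rfl⟩ : ∃ s, r = s + 1 := ⟨r - 1, (Nat.succ_pred_eq_of_pos hr1).symm⟩
  simp only [Nat.add_sub_cancel] at hw
  show (Nat.card {u : Fin (s+1) → F // (∑ t, u t * v t) = 0 ∧ rk K u = (s+1)} : ℤ) =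
      (∏ i ∈ Finset.range s, ((q : ℤ) ^ m - (q : ℤ) ^ i)) -
        (q : ℤ) ^ s *
          (Nat.card {u : Fin s → F // (∑ t, u t * w t) = 0 ∧ rk K u = s} : ℤ)
  have hv' : LinearIndependent K v := (rk_eq_iff_li v).mp hv
  have hw' : LinearIndependent K w := (rk_eq_iff_li w).mp hw
  have e1 : {u : Fin (s+1) → F // (∑ t, u t * v t) = 0 ∧ rk K u = s+1} ≃
      {u : Fin (s+1) → F // (∑ t, u t * v t) = 0 ∧ LinearIndependent K u} :=
    Equiv.subtypeEquivRight fun u => and_congr_right fun _ => rk_eq_iff_li u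
  have e2 : {u : Fin s → F // (∑ t, u t * w t) = 0 ∧ rk K u = s} ≃
      {u : Fin s → F // (∑ t, u t * w t) = 0 ∧ LinearIndependent K u} :=
    Equiv.subtypeEquivRight fun u => and_congr_right fun _ => rk_eq_iff_li u
  rw [Nat.card_congr e1, Nat.card_congr e2]
  have hrec := recursion_aux v hv' w hw'
  have hcast : ((∏ i ∈ range s, (Fintype.card F - Fintype.card K ^ i) : ℕ) : ℤ)
      = ∏ i ∈ range s, ((q:ℤ)^m - (q:ℤ)^i) := by
    rw [Nat.cast_prod]
    apply Finset.prod_congr rfl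
    intro i hi
    have hle : Fintype.card K ^ i ≤ Fintype.card F := by
      rw [hK, hF]
      exact Nat.pow_le_pow_right hq.one_lt.le
        ((Finset.mem_range.mp hi).trans ((Nat.lt_succ_self s).trans_le hrm)).le
    rw [Nat.cast_sub hle, hK, hF]
    push_cast
    ring
  have hZ := congrArg (fun x : ℕ => (x : ℤ)) hrec
  simp only [Nat.cast_add, Nat.cast_mul, Nat.cast_pow] at hZ
  rw [hcast, hK] at hZ
  linarith
end

section
/- (Moments of the rank distribution.) Let C be a k-dimensional GF(q^m)-linear subspace of GF(q^m)^n with rank distribution A_i = #{c ∈ C : rk(c) = i}, and let B_j = #{c ∈ C^⊥ : rk(c) = j}. Then for every 0 ≤ ν ≤ n, Σ_{i=0}^{n−ν} [n−i, ν]_q A_i = q^{m(k−ν)} · Σ_{j=0}^{ν} [n−j, n−ν]_q B_j. -/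
open Finset

set_option linter.unusedSectionVars false
set_option maxHeartbeats 1000000

open Module Submodule

namespace RDM

def aN (q d u : ℕ) : ℕ := ∏ i ∈ Finset.range u, (q ^ d - q ^ i)

lemma alphaR_nat (q d u : ℕ) : alphaR (q:ℝ) (d:ℤ) u = ∏ i ∈ Finset.range u, ((q:ℝ) ^ d - (q:ℝ) ^ i) := by
  unfold alphaR
  refine Finset.prod_congr rfl fun i _ => ?_
  rw [zpow_natCast, zpow_natCast]

lemma aN_cast (q : ℕ) (hq : 1 ≤ q) (d u : ℕ) : (aN q d u : ℝ) = alphaR (q:ℝ) (d:ℤ) u := by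
  rw [alphaR_nat, aN]
  rcases le_or_gt u d with h | h
  · push_cast [Nat.cast_prod]
    refine Finset.prod_congr rfl fun i hi => ?_
    have hi' : i < u := Finset.mem_range.mp hi
    have : q ^ i ≤ q ^ d := Nat.pow_le_pow_right hq (by omega)
    push_cast [Nat.cast_sub this]
    ring
  · have hd : d ∈ Finset.range u := Finset.mem_range.mpr h
    rw [Finset.prod_eq_zero hd (by simp), Finset.prod_eq_zero hd (by simp)]
    simp

lemma aN_self_pos (q u : ℕ) (hq : 2 ≤ q) : 0 < aN q u u := by
  apply Finset.prod_pos
  intro i hi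
  have : q ^ i < q ^ u := Nat.pow_lt_pow_right (by omega) (Finset.mem_range.mp hi)
  omega

lemma alphaR_self_ne_zero (q u : ℕ) (hq : 2 ≤ q) : alphaR (q:ℝ) (u:ℤ) u ≠ 0 := by
  rw [← aN_cast q (by omega)]
  exact_mod_cast (aN_self_pos q u hq).ne'

/-- double counting swap -/
lemma sum_card_swap {A B : Type*} [Fintype A] [Fintype B] (P : A → B → Prop) :
    ∑ a : A, Nat.card {b : B // P a b} = ∑ b : B, Nat.card {a : A // P a b} := by
  classical
  simp only [Nat.card_eq_fintype_card, Fintype.card_subtype, Finset.card_filter]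
  exact Finset.sum_comm

/-- partition by fibers -/
lemma card_fiber_sum {A B : Type*} [Fintype A] [Fintype B] (f : A → B) :
    Nat.card A = ∑ b : B, Nat.card {a : A // f a = b} := by
  classical
  simp only [Nat.card_eq_fintype_card, Fintype.card_subtype, Finset.card_filter]
  rw [Finset.sum_comm]
  simp


section Cnt

variable {K : Type*} [Field K] [Fintype K]
variable {V : Type*} [AddCommGroup V] [Module K V] [Finite V]

lemma card_indep (r : ℕ) :
    Nat.card { s : Fin r → V // LinearIndependent K s } = aN (Fintype.card K) (finrank K V) r := by
  rcases le_or_gt r (finrank K V) with h | h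
  · rw [card_linearIndependent h, aN,
      Finset.prod_range fun i => (Fintype.card K ^ finrank K V - Fintype.card K ^ i)]
  · have : IsEmpty { s : Fin r → V // LinearIndependent K s } := by
      constructor
      rintro ⟨s, hs⟩
      have := hs.fintype_card_le_finrank
      simp at this; omega
    rw [Nat.card_of_isEmpty, aN, Finset.prod_eq_zero (Finset.mem_range.mpr h) (by simp)]

/-- tuples valued in a submodule -/
lemma card_indep_into (Z : Submodule K V) (r : ℕ) :
    Nat.card {X : Fin r → V // LinearIndependent K X ∧ ∀ l, X l ∈ Z}
      = aN (Fintype.card K) (finrank K Z) r := by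
  rw [← card_indep (K := K) (V := Z) r]
  refine Nat.card_congr ⟨fun a => ⟨fun l => ⟨a.1 l, a.2.2 l⟩, ?_⟩,
    fun s => ⟨fun l => (s.1 l : V), (s.2.map' Z.subtype (ker_subtype Z)), fun l => (s.1 l).2⟩,
    fun a => Subtype.ext rfl, fun s => Subtype.ext rfl⟩
  exact LinearIndependent.of_comp Z.subtype a.2.1

lemma span_range_val_eq {r : ℕ} {U : Submodule K V} (hU : finrank K U = r)
    {Y : Fin r → V} (hY : LinearIndependent K Y) (hmem : ∀ l, Y l ∈ U) :
    span K (Set.range Y) = U := by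
  apply Submodule.eq_of_le_of_finrank_le
  · rw [Submodule.span_le, Set.range_subset_iff]; exact hmem
  · rw [finrank_span_eq_card hY, Fintype.card_fin, hU]

/-- L2: tuples whose span contains W -/
lemma card_indep_span_ge (W : Submodule K V) (r : ℕ) :
    Nat.card {X : Fin r → V // LinearIndependent K X ∧ W ≤ span K (Set.range X)}
      = Nat.card {U : Submodule K V // finrank K U = r ∧ W ≤ U} * aN (Fintype.card K) r r := by
  classical
  set A := {X : Fin r → V // LinearIndependent K X ∧ W ≤ span K (Set.range X)} with hA
  set B := {U : Submodule K V // finrank K U = r ∧ W ≤ U} with hB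
  have hprop : ∀ a : A, finrank K (span K (Set.range a.1)) = r ∧ W ≤ span K (Set.range a.1) :=
    fun a => ⟨by rw [finrank_span_eq_card a.2.1, Fintype.card_fin], a.2.2⟩
  have := Fintype.ofFinite A
  have := Fintype.ofFinite B
  set f : A → B := fun a => ⟨span K (Set.range a.1), hprop a⟩ with hf
  rw [card_fiber_sum f]
  rw [Finset.sum_congr rfl (fun b _ => ?_), Finset.sum_const, Finset.card_univ,
    Nat.card_eq_fintype_card, smul_eq_mul]
  -- fiber over b has cardinality aN q r r
  have : Nat.card {a : A // f a = b} =
      Nat.card {X : Fin r → V // LinearIndependent K X ∧ ∀ l, X l ∈ b.1} := by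
    refine Nat.card_congr ⟨fun a => ⟨a.1.1, a.1.2.1, fun l => ?_⟩, fun X => ⟨⟨X.1, X.2.1, ?_⟩, ?_⟩,
      fun a => Subtype.ext (Subtype.ext rfl), fun X => Subtype.ext rfl⟩
    · have : span K (Set.range a.1.1) = b.1 := congrArg Subtype.val a.2
      exact this ▸ Submodule.subset_span (Set.mem_range_self l)
    · have h : span K (Set.range X.1) = b.1 := span_range_val_eq b.2.1 X.2.1 X.2.2
      rw [h]; exact b.2.2
    · exact Subtype.ext (span_range_val_eq b.2.1 X.2.1 X.2.2)
  rw [this, card_indep_into b.1 r, b.2.1]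


omit [Fintype K] in
lemma finrank_map_mkQ_add {W U : Submodule K V} (h : W ≤ U) :
    finrank K (U.map W.mkQ) + finrank K W = finrank K U := by
  have hrn := LinearMap.finrank_range_add_finrank_ker ((W.mkQ).comp U.subtype)
  rw [LinearMap.range_comp, Submodule.range_subtype, LinearMap.ker_comp, Submodule.ker_mkQ] at hrn
  rw [LinearEquiv.finrank_eq (Submodule.comapSubtypeEquivOfLe h)] at hrn
  exact hrn

omit [Fintype K] in
lemma le_comap_mkQ (W : Submodule K V) (U' : Submodule K (V ⧸ W)) : W ≤ U'.comap W.mkQ := by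
  intro x hx
  simp [Submodule.mem_comap, (Submodule.Quotient.mk_eq_zero W).mpr hx]

/-- L4 -/
lemma card_grass_ge_quot (W : Submodule K V) (r : ℕ) (hr : finrank K W ≤ r) :
    Nat.card {U : Submodule K V // finrank K U = r ∧ W ≤ U}
      = Nat.card {U' : Submodule K (V ⧸ W) // finrank K U' = r - finrank K W} := by
  have hmc : ∀ U' : Submodule K (V ⧸ W), (U'.comap W.mkQ).map W.mkQ = U' :=
    fun U' => Submodule.map_comap_eq_of_surjective (Submodule.mkQ_surjective W) _
  refine Nat.card_congr ⟨fun U => ⟨U.1.map W.mkQ, ?_⟩,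
    fun U' => ⟨U'.1.comap W.mkQ, ?_, le_comap_mkQ W U'.1⟩, ?_, ?_⟩
  · have := finrank_map_mkQ_add U.2.2
    rw [U.2.1] at this; omega
  · have := finrank_map_mkQ_add (le_comap_mkQ W U'.1)
    rw [hmc U'.1, U'.2] at this; omega
  · intro U
    refine Subtype.ext ?_
    show (U.1.map W.mkQ).comap W.mkQ = U.1
    rw [Submodule.comap_map_eq, Submodule.ker_mkQ, sup_eq_left.mpr U.2.2]
  · intro U'
    exact Subtype.ext (hmc U'.1)


/-- L3 -/
lemma card_grass_mul (r : ℕ) :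
    Nat.card {U : Submodule K V // finrank K U = r} * aN (Fintype.card K) r r
      = aN (Fintype.card K) (finrank K V) r := by
  have h := card_indep_span_ge (⊥ : Submodule K V) r
  have e1 : Nat.card {X : Fin r → V // LinearIndependent K X ∧ (⊥ : Submodule K V) ≤ span K (Set.range X)}
      = Nat.card {X : Fin r → V // LinearIndependent K X} :=
    Nat.card_congr (Equiv.subtypeEquivRight fun X => by simp)
  have e2 : Nat.card {U : Submodule K V // finrank K U = r ∧ (⊥ : Submodule K V) ≤ U}
      = Nat.card {U : Submodule K V // finrank K U = r} :=
    Nat.card_congr (Equiv.subtypeEquivRight fun U => by simp)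
  rw [e1, card_indep, e2] at h
  exact h.symm

lemma card_grass_congr {V' : Type*} [AddCommGroup V'] [Module K V'] (e : V ≃ₗ[K] V') (r : ℕ) :
    Nat.card {U : Submodule K V // finrank K U = r}
      = Nat.card {U' : Submodule K V' // finrank K U' = r} := by
  refine Nat.card_congr (Equiv.subtypeEquiv (Submodule.orderIsoMapComap e).toEquiv fun U => ?_)
  have h1 : finrank K (((Submodule.orderIsoMapComap e).toEquiv U : Submodule K V')) = finrank K U := by
    rw [show ((Submodule.orderIsoMapComap e).toEquiv U : Submodule K V')
      = Submodule.map (e.toLinearMap) U from rfl, LinearEquiv.finrank_map_eq]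
  rw [h1]

end Cnt

variable (k : Type*) [Field k] (ι : Type*) [Fintype ι]

noncomputable def dotF : LinearMap.BilinForm k (ι → k) :=
  LinearMap.mk₂ k (fun v w => ∑ t, v t * w t)
    (fun a b c => by simp [add_mul, Finset.sum_add_distrib])
    (fun a b c => by simp [Finset.mul_sum, mul_assoc])
    (fun a b c => by simp [mul_add, Finset.sum_add_distrib])
    (fun a b c => by simp [Finset.mul_sum]; ring_nf; simp [mul_assoc, mul_comm, mul_left_comm])

@[simp] lemma dotF_apply (v w : ι → k) : dotF k ι v w = ∑ t, v t * w t := rfl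

lemma dotF_isRefl : (dotF k ι).IsRefl := by
  intro v w h
  simpa [mul_comm] using h

lemma dotF_nondeg [DecidableEq ι] : (dotF k ι).Nondegenerate := by
  refine ⟨fun v h => ?_, fun v h => ?_⟩ <;>
  · funext t
    have := h (Pi.single t 1)
    simpa [Pi.single_apply, Finset.sum_ite_eq', Finset.sum_ite_eq] using this

lemma dotF_orthogonal_span (S : Set (ι → k)) (v : ι → k) :
    v ∈ (dotF k ι).orthogonal (span k S) ↔ ∀ s ∈ S, dotF k ι s v = 0 := by
  constructor
  · intro h s hs
    exact h s (Submodule.subset_span hs)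
  · intro h x hx
    induction hx using Submodule.span_induction with
    | mem y hy => exact h y hy
    | zero =>
        show dotF k ι (0 : ι → k) v = 0
        rw [map_zero, LinearMap.zero_apply]
    | add y z _ _ hy hz =>
        show dotF k ι (y + z) v = 0
        rw [map_add, LinearMap.add_apply, hy, hz, add_zero]
    | smul a y _ hy =>
        show dotF k ι (a • y) v = 0
        rw [map_smul, LinearMap.smul_apply, hy, smul_zero]

section Sym
variable {K : Type*} [Field K] [Fintype K]

lemma card_grass_symm_pi (d r : ℕ) (hr : r ≤ d) :
    Nat.card {U : Submodule K (Fin d → K) // finrank K U = r}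
      = Nat.card {U : Submodule K (Fin d → K) // finrank K U = d - r} := by
  classical
  have hd : finrank K (Fin d → K) = d := by simp
  have hnd := dotF_nondeg K (Fin d)
  have hrefl := dotF_isRefl K (Fin d)
  refine Nat.card_congr ⟨fun U => ⟨(dotF K (Fin d)).orthogonal U.1, ?_⟩,
    fun U => ⟨(dotF K (Fin d)).orthogonal U.1, ?_⟩, ?_, ?_⟩
  · rw [LinearMap.BilinForm.finrank_orthogonal hnd, U.2, hd]
  · rw [LinearMap.BilinForm.finrank_orthogonal hnd, U.2, hd]
    omega
  · intro U
    exact Subtype.ext (LinearMap.BilinForm.orthogonal_orthogonal hnd hrefl U.1)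
  · intro U
    exact Subtype.ext (LinearMap.BilinForm.orthogonal_orthogonal hnd hrefl U.1)

variable {V : Type*} [AddCommGroup V] [Module K V] [Finite V]

lemma card_grass_symm (r : ℕ) (hr : r ≤ finrank K V) :
    Nat.card {U : Submodule K V // finrank K U = r}
      = Nat.card {U : Submodule K V // finrank K U = finrank K V - r} := by
  rw [card_grass_congr (Module.finBasis K V).equivFun r,
    card_grass_congr (Module.finBasis K V).equivFun (finrank K V - r),
    card_grass_symm_pi _ _ hr]

/-- KEY1 : the K-side count -/
lemma key_count {n : ℕ} (W : Submodule K (Fin n → K)) (ν : ℕ)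
    (hj : finrank K W ≤ ν) (hν : ν ≤ n) :
    (Nat.card {X : Fin ν → (Fin n → K) // LinearIndependent K X ∧ W ≤ span K (Set.range X)} : ℝ)
      = (aN (Fintype.card K) ν ν : ℝ)
          * gaussR (Fintype.card K) (n - finrank K W) (n - ν) := by
  have hq2 : 2 ≤ Fintype.card K := Fintype.one_lt_card
  have hq1 : 1 ≤ Fintype.card K := by omega
  have hdim : finrank K (Fin n → K) = n := by simp
  have hQ : finrank K ((Fin n → K) ⧸ W) = n - finrank K W := by
    have := Submodule.finrank_quotient_add_finrank W
    rw [hdim] at this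
    omega
  have hWn : finrank K W ≤ n := le_trans W.finrank_le (le_of_eq hdim)
  rw [card_indep_span_ge, card_grass_ge_quot W ν hj]
  rw [card_grass_symm (ν - finrank K W) (by omega)]
  have h2 : finrank K ((Fin n → K) ⧸ W) - (ν - finrank K W) = n - ν := by omega
  rw [h2]
  have h3 := card_grass_mul (K := K) (V := (Fin n → K) ⧸ W) (n - ν)
  rw [hQ] at h3
  -- h3 : card * aN (n-ν) (n-ν) = aN (n - finrank W) (n - ν)
  have hB : (aN (Fintype.card K) (n - ν) (n - ν) : ℝ) ≠ 0 := by
    exact_mod_cast (aN_self_pos (Fintype.card K) (n - ν) hq2).ne'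
  have h4 : (Nat.card {U : Submodule K ((Fin n → K) ⧸ W) // finrank K U = n - ν} : ℝ)
      = (aN (Fintype.card K) (n - finrank K W) (n - ν) : ℝ)
        / (aN (Fintype.card K) (n - ν) (n - ν) : ℝ) := by
    rw [eq_div_iff hB]
    exact_mod_cast h3
  rw [Nat.cast_mul, h4, gaussR, ← aN_cast _ hq1, ← aN_cast _ hq1]
  ring

end Sym

section FExt
variable {K F : Type*} [Field K] [Field F] [Algebra K F] [Fintype K] [Fintype F] {n : ℕ}

/-- coordinatewise inclusion of `K^n` into `F^n` -/
def iotaL (K F : Type*) [Field K] [Field F] [Algebra K F] (n : ℕ) :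
    (Fin n → K) →ₗ[K] (Fin n → F) where
  toFun x := fun t => algebraMap K F (x t)
  map_add' x y := by funext t; simp
  map_smul' a x := by funext t; simp [Algebra.smul_def]

@[simp] lemma iotaL_apply (x : Fin n → K) (t : Fin n) : iotaL K F n x t = algebraMap K F (x t) := rfl

/-- the `s`-th coordinate vector of `v` w.r.t. a basis of `F` over `K` -/
noncomputable def wc (v : Fin n → F) (s : Fin (finrank K F)) : Fin n → K :=
  fun t => (Module.finBasis K F).repr (v t) s

/-- the column space of `v` -/
noncomputable def ColS (K : Type*) {F : Type*} [Field K] [Field F] [Algebra K F] [Fintype F]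
    {n : ℕ} (v : Fin n → F) : Submodule K (Fin n → K) :=
  span K (Set.range (wc v))

lemma wc_smul (a : F) (x : Fin n → F) (s : Fin (finrank K F)) :
    wc (a • x) s = ∑ s', ((Module.finBasis K F).repr (a * (Module.finBasis K F) s') s) • wc x s' := by
  set e := Module.finBasis K F
  funext t
  have hx : x t = ∑ s', e.repr (x t) s' • e s' := (e.sum_repr (x t)).symm
  have : (a • x) t = ∑ s', e.repr (x t) s' • (a * e s') := by
    rw [Pi.smul_apply, smul_eq_mul]
    conv_lhs => rw [hx]
    rw [Finset.mul_sum]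
    exact Finset.sum_congr rfl fun s' _ => (Algebra.mul_smul_comm _ _ _)
  show e.repr ((a • x) t) s = (∑ s', ((e.repr (a * e s')) s) • wc x s') t
  rw [this, map_sum, Finsupp.finset_sum_apply, Finset.sum_apply]
  refine Finset.sum_congr rfl fun s' _ => ?_
  rw [map_smul, Finsupp.smul_apply]
  show (e.repr (x t)) s' • (e.repr (a * e s')) s = ((e.repr (a * e s')) s) • wc x s' t
  simp [wc, smul_eq_mul, mul_comm]
  exact Or.inl rfl

lemma mem_span_iotaL_iff (W : Submodule K (Fin n → K)) (v : Fin n → F) :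
    v ∈ span F ((iotaL K F n) '' (W : Set (Fin n → K))) ↔ ∀ s, wc v s ∈ W := by
  set e := Module.finBasis K F
  constructor
  · intro h
    induction h using Submodule.span_induction with
    | mem y hy =>
        obtain ⟨x, hx, rfl⟩ := hy
        intro s
        have : wc ((iotaL K F n) x) s = (e.repr 1 s) • x := by
          funext t
          show e.repr (algebraMap K F (x t)) s = _
          rw [Algebra.algebraMap_eq_smul_one, map_smul, Finsupp.smul_apply]
          simp [smul_eq_mul, mul_comm]
        rw [this]
        exact W.smul_mem _ hx
    | zero => intro s; have : wc (0 : Fin n → F) s = 0 := by funext t; simp [wc]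
              rw [this]; exact W.zero_mem
    | add y z _ _ hy hz =>
        intro s
        have : wc (y + z) s = wc y s + wc z s := by funext t; simp [wc]
        rw [this]; exact W.add_mem (hy s) (hz s)
    | smul a y _ hy =>
        intro s
        rw [wc_smul]
        exact Submodule.sum_mem W fun s' _ => W.smul_mem _ (hy s')
  · intro h
    have hv : v = ∑ s, e s • (iotaL K F n) (wc v s) := by
      funext t
      rw [Finset.sum_apply]
      have : ∀ s, (e s • (iotaL K F n) (wc v s)) t = e.repr (v t) s • e s := by
        intro s
        show e s • algebraMap K F (wc v s t) = _
        rw [smul_eq_mul, mul_comm, ← Algebra.smul_def]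
        rfl
      rw [Finset.sum_congr rfl fun s _ => this s, e.sum_repr (v t)]
    rw [hv]
    exact Submodule.sum_mem _ fun s _ =>
      Submodule.smul_mem _ _ (Submodule.subset_span ⟨wc v s, h s, rfl⟩)

lemma finrank_ColS (v : Fin n → F) : finrank K (ColS K v) = rk K v := by
  have e := Module.finBasis K F
  have h1 : finrank K (ColS K v) = (Matrix.of (wc v) : Matrix (Fin (finrank K F)) (Fin n) K).rank := by
    rw [Matrix.rank_eq_finrank_span_row]
    rfl
  rw [h1, ← Matrix.rank_transpose, Matrix.rank_eq_finrank_span_row]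
  have hr : Set.range (Matrix.of (wc v) : Matrix (Fin (finrank K F)) (Fin n) K).transpose.row
      = ⇑((Module.finBasis K F).equivFun.toLinearMap) '' (Set.range v) := by
    rw [← Set.range_comp]
    rfl
  rw [hr, ← Submodule.map_span ((Module.finBasis K F).equivFun.toLinearMap) (Set.range v), rk]
  exact LinearEquiv.finrank_map_eq (Module.finBasis K F).equivFun _

end FExt

section More

/-- reassociation of nested subtypes -/
def subtypeAssoc {α : Type*} {p q : α → Prop} : {x : α // p x ∧ q x} ≃ {y : {x : α // p x} // q y.1} where
  toFun a := ⟨⟨a.1, a.2.1⟩, a.2.2⟩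
  invFun b := ⟨b.1.1, b.1.2, b.2⟩
  left_inv a := rfl
  right_inv b := rfl

lemma orth_sup {k V : Type*} [Field k] [AddCommGroup V] [Module k V]
    (B : LinearMap.BilinForm k V) (S T : Submodule k V) :
    B.orthogonal (S ⊔ T) = B.orthogonal S ⊓ B.orthogonal T := by
  ext v
  constructor
  · intro h
    exact ⟨fun x hx => h x (Submodule.mem_sup_left hx),
      fun x hx => h x (Submodule.mem_sup_right hx)⟩
  · rintro ⟨h1, h2⟩ x hx
    rcases Submodule.mem_sup.mp hx with ⟨a, ha, b, hb, rfl⟩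
    show B (a + b) v = 0
    rw [map_add, LinearMap.add_apply, h1 a ha, h2 b hb, add_zero]

lemma gaussR_zero_of_lt {q : ℕ} (hq : 1 ≤ q) {d u : ℕ} (h : d < u) :
    gaussR (q : ℝ) d u = 0 := by
  rw [gaussR, alphaR, Finset.prod_eq_zero (Finset.mem_range.mpr h) (by simp), zero_div]

end More

section FSide
variable {K F : Type*} [Field K] [Field F] [Algebra K F] [Fintype K] [Fintype F] {n : ℕ}

/-- the K-linear map x ↦ ∑ x t • c t -/
def psiL (c : Fin n → F) : (Fin n → K) →ₗ[K] F where
  toFun x := ∑ t, x t • c t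
  map_add' x y := by simp [add_smul, Finset.sum_add_distrib]
  map_smul' a x := by simp [Finset.smul_sum, smul_smul]

lemma range_psiL (c : Fin n → F) : LinearMap.range (psiL (K := K) c) = span K (Set.range c) := by
  apply le_antisymm
  · rintro y ⟨x, rfl⟩
    show ∑ t, x t • c t ∈ span K (Set.range c)
    exact Submodule.sum_mem _ fun t _ =>
      Submodule.smul_mem _ _ (Submodule.subset_span (Set.mem_range_self t))
  · rw [Submodule.span_le]
    rintro y ⟨t, rfl⟩
    set x : Fin n → K := Pi.single t 1 with hx0
    refine ⟨x, ?_⟩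
    show ∑ t', x t' • c t' = c t
    simp [hx0, Pi.single_apply, ite_smul]

lemma finrank_ker_psiL (c : Fin n → F) :
    finrank K (LinearMap.ker (psiL (K := K) c)) = n - rk K c ∧ rk K c ≤ n := by
  have h := LinearMap.finrank_range_add_finrank_ker (psiL (K := K) c)
  rw [range_psiL] at h
  have hd : finrank K (Fin n → K) = n := by simp
  rw [hd] at h
  have : finrank K (span K (Set.range c)) = rk K c := rfl
  rw [this] at h
  omega

lemma iota_indep {ν : ℕ} {X : Fin ν → (Fin n → K)} (hX : LinearIndependent K X) :
    LinearIndependent F (fun l => iotaL K F n (X l)) := by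
  rw [Fintype.linearIndependent_iff]
  intro g hg
  set e := Module.finBasis K F with he
  have hcoord : ∀ s, ∑ l, (e.repr (g l) s) • X l = 0 := by
    intro s
    funext t
    have ht : ∑ l, (g l • iotaL K F n (X l)) t = 0 := by
      rw [← Finset.sum_apply]
      rw [hg]
      rfl
    have ht2 : ∑ l, (X l t) • g l = 0 := by
      rw [← ht]
      refine Finset.sum_congr rfl fun l _ => ?_
      show X l t • g l = g l • algebraMap K F (X l t)
      rw [Algebra.smul_def, smul_eq_mul, mul_comm]
    have h5 := congrArg (fun y => e.repr y s) ht2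
    simp only [map_sum, Finsupp.finset_sum_apply, map_smul, Finsupp.smul_apply, map_zero,
      Finsupp.coe_zero, Pi.zero_apply, smul_eq_mul] at h5
    rw [Finset.sum_apply]
    simp only [Pi.smul_apply, smul_eq_mul, Pi.zero_apply]
    rw [← h5]
    exact Finset.sum_congr rfl fun l _ => mul_comm _ _
  have hc : ∀ s l, e.repr (g l) s = 0 := fun s =>
    Fintype.linearIndependent_iff.mp hX _ (hcoord s)
  intro l
  have : e.repr (g l) = 0 := Finsupp.ext fun s => hc s l
  simpa using congrArg e.repr.symm this

lemma span_iota_span (S : Set (Fin n → K)) :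
    span F ((iotaL K F n) '' ((span K S : Submodule K (Fin n → K)) : Set (Fin n → K)))
      = span F ((iotaL K F n) '' S) := by
  apply le_antisymm
  · rw [Submodule.span_le]
    rintro _ ⟨x, hx, rfl⟩
    induction hx using Submodule.span_induction with
    | mem y hy => exact Submodule.subset_span (Set.mem_image_of_mem _ hy)
    | zero => rw [map_zero]; exact Submodule.zero_mem _
    | add y z _ _ hy hz => rw [map_add]; exact Submodule.add_mem _ hy hz
    | smul a y _ hy =>
        rw [map_smul, ← algebraMap_smul F a (iotaL K F n y)]
        exact Submodule.smul_mem _ _ hy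
  · exact Submodule.span_mono (Set.image_mono Submodule.subset_span)

lemma mem_ker_psiL_iff_dot (c : Fin n → F) (x : Fin n → K) :
    x ∈ LinearMap.ker (psiL (K := K) c) ↔ dotF F (Fin n) (iotaL K F n x) c = 0 := by
  have h : (∑ t, x t • c t) = ∑ t, iotaL K F n x t * c t :=
    Finset.sum_congr rfl fun t _ => Algebra.smul_def _ _
  rw [LinearMap.mem_ker]
  show (∑ t, x t • c t) = 0 ↔ dotF F (Fin n) (iotaL K F n x) c = 0
  rw [dotF_apply, h]

end FSide

lemma aN_zero_of_lt {q d u : ℕ} (h : d < u) : aN q d u = 0 := by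
  rw [aN, Finset.prod_eq_zero (Finset.mem_range.mpr h) (by simp)]

lemma card_mem_inf {R M : Type*} [Ring R] [AddCommGroup M] [Module R M] (S T : Submodule R M) :
    Nat.card {c : ↥S // c.1 ∈ T} = Nat.card ↥(S ⊓ T) :=
  Nat.card_congr ⟨fun c => ⟨c.1.1, Submodule.mem_inf.mpr ⟨c.1.2, c.2⟩⟩,
    fun x => ⟨⟨x.1, (Submodule.mem_inf.mp x.2).1⟩, (Submodule.mem_inf.mp x.2).2⟩,
    fun c => Subtype.ext (Subtype.ext rfl), fun x => Subtype.ext rfl⟩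

section Group
variable {K F : Type*} [Field K] [Field F] [Algebra K F] [Fintype K] [Fintype F] {n : ℕ}

lemma sum_by_rk (S : Submodule F (Fin n → F)) [Fintype ↥S] (h : ℕ → ℝ) :
    ∑ c : ↥S, h (rk K c.1)
      = ∑ i ∈ Finset.range (n + 1), h i * (Nat.card {c : Fin n → F // c ∈ S ∧ rk K c = i} : ℝ) := by
  classical
  rw [← Finset.sum_fiberwise_of_maps_to (g := fun c : ↥S => rk K c.1) (t := Finset.range (n + 1))
    (fun c _ => Finset.mem_range.mpr (Nat.lt_succ_of_le (finrank_ker_psiL (K := K) c.1).2))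
    (f := fun c => h (rk K c.1))]
  refine Finset.sum_congr rfl fun i _ => ?_
  have hcount : (Finset.univ.filter (fun c : ↥S => rk K c.1 = i)).card
      = Nat.card {c : Fin n → F // c ∈ S ∧ rk K c = i} := by
    rw [Nat.card_congr (subtypeAssoc (p := fun c => c ∈ S) (q := fun c => rk K c = i)),
      Nat.card_eq_fintype_card, Fintype.card_subtype]
  rw [← hcount]
  rw [show (∑ c ∈ Finset.univ.filter (fun c : ↥S => rk K c.1 = i), h (rk K c.1))
      = ∑ c ∈ Finset.univ.filter (fun c : ↥S => rk K c.1 = i), h i from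
    Finset.sum_congr rfl fun c hc => by rw [(Finset.mem_filter.mp hc).2]]
  rw [Finset.sum_const, nsmul_eq_mul, mul_comm]

end Group

end RDM

open RDM

/-- moments of the rank distribution: if `C` is a `k`-dimensional linear
code in `GF(q^m)^n` with rank distribution `A_i`, and `B_j` is the rank distribution of
its dual code, then for every `0 ≤ ν ≤ n`,
`Σ_{i=0}^{n-ν} [n-i,ν]_q A_i = q^{m(k-ν)} Σ_{j=0}^ν [n-j,n-ν]_q B_j`. -/
theorem rank_distribution_moments (q m n k : ℕ) (hq : IsPrimePow q) (hm : 0 < m) (hn : 0 < n)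
    (K F : Type*) [Field K] [Field F] [Algebra K F] [Fintype K] [Fintype F]
    (hK : Fintype.card K = q) (hF : Fintype.card F = q ^ m)
    (C : Submodule F (Fin n → F)) (hCk : Module.finrank F C = k)
    (ν : ℕ) (hν : ν ≤ n) :
    ∑ i ∈ Finset.range (n - ν + 1),
        gaussR (q : ℝ) (n - i) ν * (Nat.card {c : Fin n → F // c ∈ C ∧ rk K c = i} : ℝ) =
      (q : ℝ) ^ ((m : ℤ) * ((k : ℤ) - (ν : ℤ))) *
        ∑ j ∈ Finset.range (ν + 1),
          gaussR (q : ℝ) (n - j) (n - ν) *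
            (Nat.card {v : Fin n → F //
              (∀ c ∈ C, ∑ t, v t * c t = 0) ∧ rk K v = j} : ℝ) := by
  classical
  subst hK
  have hq2 : 2 ≤ Fintype.card K := Fintype.one_lt_card
  have hq1 : 1 ≤ Fintype.card K := by omega
  have hq0 : (0 : ℝ) < (Fintype.card K : ℝ) := by exact_mod_cast Nat.lt_of_lt_of_le Nat.zero_lt_two hq2
  have hmF : finrank K F = m := by
    have hc := card_eq_pow_finrank (K := K) (V := F)
    rw [hF] at hc
    exact Nat.pow_right_injective hq2 hc.symm
  have hdimF : finrank F (Fin n → F) = n := by simp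
  have hkn : k ≤ n := by rw [← hCk]; exact le_trans C.finrank_le (le_of_eq hdimF)
  have hnd := dotF_nondeg F (Fin n)
  have hrefl := dotF_isRefl F (Fin n)
  set BF := dotF F (Fin n) with hBF
  set D := BF.orthogonal C with hD
  haveI : Fintype ↥C := Fintype.ofFinite _
  haveI : Fintype ↥D := Fintype.ofFinite _
  haveI : Fintype {X : Fin ν → (Fin n → K) // LinearIndependent K X} := Fintype.ofFinite _
  set TY := {X : Fin ν → (Fin n → K) // LinearIndependent K X} with hTY
  have hαν : alphaR (Fintype.card K : ℝ) (ν : ℤ) ν ≠ 0 := alphaR_self_ne_zero _ _ hq2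
  -- Step A : rewrite LHS as a sum over codewords
  have stepA : ∑ i ∈ Finset.range (n - ν + 1),
        gaussR (Fintype.card K : ℝ) (n - i) ν * (Nat.card {c : Fin n → F // c ∈ C ∧ rk K c = i} : ℝ)
      = (alphaR (Fintype.card K : ℝ) (ν : ℤ) ν)⁻¹
          * ∑ c : ↥C, (aN (Fintype.card K) (n - rk K c.1) ν : ℝ) := by
    have hterm : ∀ i : ℕ, gaussR (Fintype.card K : ℝ) (n - i) ν
        = (alphaR (Fintype.card K : ℝ) (ν : ℤ) ν)⁻¹ * (aN (Fintype.card K) (n - i) ν : ℝ) := by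
      intro i
      rw [gaussR, aN_cast _ hq1, div_eq_mul_inv, mul_comm]
    calc ∑ i ∈ Finset.range (n - ν + 1),
        gaussR (Fintype.card K : ℝ) (n - i) ν * (Nat.card {c : Fin n → F // c ∈ C ∧ rk K c = i} : ℝ)
        = ∑ i ∈ Finset.range (n - ν + 1), (alphaR (Fintype.card K : ℝ) (ν : ℤ) ν)⁻¹
            * ((aN (Fintype.card K) (n - i) ν : ℝ) * (Nat.card {c : Fin n → F // c ∈ C ∧ rk K c = i} : ℝ)) := by
          refine Finset.sum_congr rfl fun i _ => ?_
          rw [hterm i, mul_assoc]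
      _ = ∑ i ∈ Finset.range (n + 1), (alphaR (Fintype.card K : ℝ) (ν : ℤ) ν)⁻¹
            * ((aN (Fintype.card K) (n - i) ν : ℝ) * (Nat.card {c : Fin n → F // c ∈ C ∧ rk K c = i} : ℝ)) := by
          refine Finset.sum_subset (Finset.range_subset_range.mpr (by omega)) fun i hi hni => ?_
          have h1 : n - i < ν := by
            rw [Finset.mem_range] at hi
            rw [Finset.mem_range] at hni
            omega
          rw [aN_zero_of_lt h1, Nat.cast_zero, zero_mul, mul_zero]
      _ = (alphaR (Fintype.card K : ℝ) (ν : ℤ) ν)⁻¹ * ∑ i ∈ Finset.range (n + 1),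
            (aN (Fintype.card K) (n - i) ν : ℝ) * (Nat.card {c : Fin n → F // c ∈ C ∧ rk K c = i} : ℝ) := by
          rw [Finset.mul_sum]
      _ = (alphaR (Fintype.card K : ℝ) (ν : ℤ) ν)⁻¹
          * ∑ c : ↥C, (aN (Fintype.card K) (n - rk K c.1) ν : ℝ) := by
          rw [sum_by_rk (K := K) C (fun i => (aN (Fintype.card K) (n - i) ν : ℝ))]
  -- per codeword : count tuples
  have stepB : ∀ c : ↥C, (aN (Fintype.card K) (n - rk K c.1) ν : ℕ)
      = Nat.card {X : TY // ∀ l, X.1 l ∈ LinearMap.ker (psiL (K := K) c.1)} := by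
    intro c
    have h1 := card_indep_into (K := K) (LinearMap.ker (psiL (K := K) c.1)) ν
    rw [(finrank_ker_psiL (K := K) c.1).1] at h1
    rw [← h1]
    exact Nat.card_congr (subtypeAssoc (p := fun X : Fin ν → (Fin n → K) => LinearIndependent K X)
      (q := fun X => ∀ l, X l ∈ LinearMap.ker (psiL (K := K) c.1)))
  have stepC : ∑ c : ↥C, Nat.card {X : TY // ∀ l, X.1 l ∈ LinearMap.ker (psiL (K := K) c.1)}
      = ∑ X : TY, Nat.card {c : ↥C // ∀ l, X.1 l ∈ LinearMap.ker (psiL (K := K) c.1)} :=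
    sum_card_swap _
  have stepD : ∀ X : TY, (Nat.card {c : ↥C // ∀ l, X.1 l ∈ LinearMap.ker (psiL (K := K) c.1)} : ℝ)
      = (Fintype.card K : ℝ) ^ ((m : ℤ) * ((k : ℤ) - (ν : ℤ)))
          * (Nat.card {v : ↥D // v.1 ∈ span F (Set.range (fun l => iotaL K F n (X.1 l)))} : ℝ) := by
    intro X
    set SX := span F (Set.range (fun l => iotaL K F n (X.1 l))) with hSX
    set T := BF.orthogonal SX with hT
    have hcond : ∀ c : Fin n → F, (∀ l, X.1 l ∈ LinearMap.ker (psiL (K := K) c)) ↔ c ∈ T := by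
      intro c
      rw [hT, hSX, dotF_orthogonal_span]
      rw [Set.forall_mem_range]
      exact forall_congr' fun l => mem_ker_psiL_iff_dot c (X.1 l)
    have h1 : Nat.card {c : ↥C // ∀ l, X.1 l ∈ LinearMap.ker (psiL (K := K) c.1)}
        = Nat.card ↥(C ⊓ T) := by
      rw [← card_mem_inf C T]
      exact Nat.card_congr (Equiv.subtypeEquivRight fun c => hcond c.1)
    have h2 : Nat.card {v : ↥D // v.1 ∈ SX} = Nat.card ↥(D ⊓ SX) := card_mem_inf D SX
    have hXind : LinearIndependent F (fun l => iotaL K F n (X.1 l)) := iota_indep X.2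
    have hSXdim : finrank F SX = ν := by
      rw [hSX, finrank_span_eq_card hXind, Fintype.card_fin]
    have hTdim : finrank F T = n - ν := by
      rw [hT, LinearMap.BilinForm.finrank_orthogonal hnd, hSXdim, hdimF]
    have hsup : finrank F ↥(C ⊔ T) + finrank F ↥(C ⊓ T) = k + (n - ν) := by
      rw [finrank_sup_add_finrank_inf_eq, hCk, hTdim]
    have horthsup : BF.orthogonal (C ⊔ T) = D ⊓ SX := by
      rw [orth_sup, ← hD, hT, LinearMap.BilinForm.orthogonal_orthogonal hnd hrefl]
    have hDS : finrank F ↥(D ⊓ SX) = n - finrank F ↥(C ⊔ T) := by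
      rw [← horthsup, LinearMap.BilinForm.finrank_orthogonal hnd, hdimF]
    have hgle : finrank F ↥(C ⊔ T) ≤ n := le_trans (Submodule.finrank_le _) (le_of_eq hdimF)
    have hexp : ((m * finrank F ↥(C ⊓ T) : ℕ) : ℤ)
        = (m : ℤ) * ((k : ℤ) - (ν : ℤ)) + ((m * finrank F ↥(D ⊓ SX) : ℕ) : ℤ) := by
      have h3 : (finrank F ↥(C ⊓ T) : ℤ) = (k : ℤ) - (ν : ℤ) + (finrank F ↥(D ⊓ SX) : ℤ) := by
        omega
      push_cast
      rw [h3]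
      ring
    have hc1 : Nat.card ↥(C ⊓ T) = Fintype.card K ^ (m * finrank F ↥(C ⊓ T)) := by
      rw [Nat.card_eq_fintype_card, card_eq_pow_finrank (K := F), hF, ← pow_mul]
    have hc2 : Nat.card ↥(D ⊓ SX) = Fintype.card K ^ (m * finrank F ↥(D ⊓ SX)) := by
      rw [Nat.card_eq_fintype_card, card_eq_pow_finrank (K := F), hF, ← pow_mul]
    rw [h1, h2, hc1, hc2]
    push_cast
    rw [← zpow_natCast (Fintype.card K : ℝ) (m * finrank F ↥(C ⊓ T)),
      ← zpow_natCast (Fintype.card K : ℝ) (m * finrank F ↥(D ⊓ SX)),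
      ← zpow_add₀ hq0.ne', hexp]
  have stepE : ∑ X : TY, Nat.card {v : ↥D // v.1 ∈ span F (Set.range (fun l => iotaL K F n (X.1 l)))}
      = ∑ v : ↥D, Nat.card {X : TY // v.1 ∈ span F (Set.range (fun l => iotaL K F n (X.1 l)))} :=
    sum_card_swap fun (X : TY) (v : ↥D) => v.1 ∈ span F (Set.range (fun l => iotaL K F n (X.1 l)))
  have stepF : ∀ v : ↥D, (Nat.card {X : TY // v.1 ∈ span F (Set.range (fun l => iotaL K F n (X.1 l)))} : ℝ)
      = (if rk K v.1 ≤ ν then (aN (Fintype.card K) ν ν : ℝ)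
          * gaussR (Fintype.card K : ℝ) (n - rk K v.1) (n - ν) else 0) := by
    intro v
    have hcond : ∀ X : TY, (v.1 ∈ span F (Set.range (fun l => iotaL K F n (X.1 l))))
        ↔ (ColS K v.1 ≤ span K (Set.range X.1)) := by
      intro X
      have h1 : Set.range (fun l => iotaL K F n (X.1 l)) = (iotaL K F n) '' Set.range X.1 := by
        rw [← Set.range_comp]
        rfl
      rw [h1, ← span_iota_span, mem_span_iotaL_iff]
      constructor
      · intro h
        rw [ColS, Submodule.span_le, Set.range_subset_iff]
        exact h
      · intro h s
        exact h (Submodule.subset_span (Set.mem_range_self s))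
    have hflat : Nat.card {X : TY // v.1 ∈ span F (Set.range (fun l => iotaL K F n (X.1 l)))}
        = Nat.card {X : Fin ν → (Fin n → K) //
            LinearIndependent K X ∧ ColS K v.1 ≤ span K (Set.range X)} := by
      rw [Nat.card_congr (Equiv.subtypeEquivRight hcond)]
      exact (Nat.card_congr (subtypeAssoc (p := fun X : Fin ν → (Fin n → K) => LinearIndependent K X)
        (q := fun X => ColS K v.1 ≤ span K (Set.range X)))).symm
    rcases le_or_gt (rk K v.1) ν with hle | hlt
    · rw [if_pos hle, hflat]
      have hkc := key_count (K := K) (ColS K v.1) ν (by rw [finrank_ColS]; exact hle) hν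
      rw [finrank_ColS] at hkc
      exact hkc
    · rw [if_neg (not_le.mpr hlt), hflat]
      have : IsEmpty {X : Fin ν → (Fin n → K) //
          LinearIndependent K X ∧ ColS K v.1 ≤ span K (Set.range X)} := by
        constructor
        rintro ⟨X, hXi, hXc⟩
        have h3 : finrank K (ColS K v.1) ≤ finrank K (span K (Set.range X)) :=
          Submodule.finrank_mono hXc
        rw [finrank_ColS, finrank_span_eq_card hXi, Fintype.card_fin] at h3
        omega
      rw [Nat.card_of_isEmpty, Nat.cast_zero]
  have stepG : ∑ v : ↥D, (if rk K v.1 ≤ ν then (aN (Fintype.card K) ν ν : ℝ)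
          * gaussR (Fintype.card K : ℝ) (n - rk K v.1) (n - ν) else 0)
      = (aN (Fintype.card K) ν ν : ℝ) * ∑ j ∈ Finset.range (ν + 1),
          gaussR (Fintype.card K : ℝ) (n - j) (n - ν) *
            (Nat.card {v : Fin n → F // (∀ c ∈ C, ∑ t, v t * c t = 0) ∧ rk K v = j} : ℝ) := by
    have hBj : ∀ j : ℕ, Nat.card {v : Fin n → F // v ∈ D ∧ rk K v = j}
        = Nat.card {v : Fin n → F // (∀ c ∈ C, ∑ t, v t * c t = 0) ∧ rk K v = j} := by
      intro j
      refine Nat.card_congr (Equiv.subtypeEquivRight fun v => ?_)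
      apply and_congr_left'
      rw [hD, LinearMap.BilinForm.mem_orthogonal_iff]
      refine forall₂_congr fun c hc => ?_
      show BF c v = 0 ↔ _
      rw [dotF_apply]
      rw [show (∑ t, c t * v t) = ∑ t, v t * c t from Finset.sum_congr rfl fun t _ => mul_comm _ _]
    rw [sum_by_rk (K := K) D (fun j => if j ≤ ν then (aN (Fintype.card K) ν ν : ℝ)
          * gaussR (Fintype.card K : ℝ) (n - j) (n - ν) else 0)]
    rw [← Finset.sum_subset (Finset.range_subset_range.mpr (by omega : ν + 1 ≤ n + 1))
      (fun j hj hnj => by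
        rw [if_neg (by rw [Finset.mem_range] at hnj; omega), zero_mul])]
    rw [Finset.mul_sum]
    refine Finset.sum_congr rfl fun j hj => ?_
    rw [Finset.mem_range] at hj
    rw [if_pos (by omega : j ≤ ν), hBj j]
    ring
  -- assemble
  rw [stepA]
  have e1 : ∑ c : ↥C, (aN (Fintype.card K) (n - rk K c.1) ν : ℝ)
      = ∑ X : TY, (Nat.card {c : ↥C // ∀ l, X.1 l ∈ LinearMap.ker (psiL (K := K) c.1)} : ℝ) := by
    have h1 : ∑ c : ↥C, (aN (Fintype.card K) (n - rk K c.1) ν : ℝ)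
        = ∑ c : ↥C, (Nat.card {X : TY // ∀ l, X.1 l ∈ LinearMap.ker (psiL (K := K) c.1)} : ℝ) :=
      Finset.sum_congr rfl fun c _ => by rw [stepB c]
    rw [h1, ← Nat.cast_sum, ← Nat.cast_sum, stepC]
  rw [e1, Finset.sum_congr rfl fun X _ => stepD X, ← Finset.mul_sum]
  have e2 : ∑ X : TY, (Nat.card {v : ↥D // v.1 ∈ span F (Set.range (fun l => iotaL K F n (X.1 l)))} : ℝ)
      = ∑ v : ↥D, (Nat.card {X : TY // v.1 ∈ span F (Set.range (fun l => iotaL K F n (X.1 l)))} : ℝ) := by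
    exact_mod_cast congrArg (Nat.cast (R := ℝ)) stepE
  rw [e2, Finset.sum_congr rfl fun v _ => stepF v, stepG]
  rw [show (aN (Fintype.card K) ν ν : ℝ) = alphaR (Fintype.card K : ℝ) (ν : ℤ) ν from aN_cast _ hq1 _ _]
  field_simp
end

section
/- Let C be a k-dimensional GF(q^m)-linear subspace of GF(q^m)^n with rank distribution A_i = #{c ∈ C : rk(c) = i}, and suppose that 0 ≤ ν ≤ n is such that every nonzero codeword of the dual code C^⊥ has rank strictly greater than ν (i.e., ν is less than the minimum rank distance of C^⊥). Then Σ_{i=0}^{n−ν} [n−i, ν]_q A_i = q^{m(k−ν)} · [n, ν]_q. -/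
open Finset

namespace RankMoments

open Module

def alphaN (q d u : ℕ) : ℕ := ∏ i ∈ Finset.range u, (q ^ d - q ^ i)

lemma alphaN_cast (q d u : ℕ) (hq : 2 ≤ q) : (alphaN q d u : ℝ) = alphaR (q : ℝ) d u := by
  by_cases hud : u ≤ d
  · rw [alphaN, alphaR, Nat.cast_prod]
    refine Finset.prod_congr rfl fun i hi => ?_
    have hi' : i ≤ d := by have := Finset.mem_range.1 hi; omega
    rw [Nat.cast_sub (Nat.pow_le_pow_right (by omega) hi')]
    push_cast [zpow_natCast]
    ring
  · have h1 : alphaN q d u = 0 := by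
      apply Finset.prod_eq_zero (i := d) (Finset.mem_range.2 (by omega))
      omega
    have h2 : alphaR (q:ℝ) d u = 0 := by
      apply Finset.prod_eq_zero (i := d) (Finset.mem_range.2 (by omega))
      simp
    rw [h1, h2, Nat.cast_zero]

lemma alphaN_pos (q d u : ℕ) (hq : 2 ≤ q) (hud : u ≤ d) : 0 < alphaN q d u := by
  apply Finset.prod_pos
  intro i hi
  have hi' : i < d := by have := Finset.mem_range.1 hi; omega
  have := Nat.pow_lt_pow_right (show 1 < q by omega) hi'
  omega

lemma gaussR_eq_zero (q : ℝ) (d u : ℕ) (h : d < u) : gaussR q d u = 0 := by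
  rw [gaussR, alphaR, Finset.prod_eq_zero (i := d) (Finset.mem_range.2 h) (by simp), zero_div]

lemma card_grass (K V : Type*) [Field K] [Fintype K] [AddCommGroup V] [Module K V]
    [Finite V] (u : ℕ) :
    Nat.card {W : Submodule K V // finrank K W = u} * alphaN (Fintype.card K) u u
      = alphaN (Fintype.card K) (finrank K V) u := by
  classical
  haveI : Module.Finite K V := Module.Finite.of_finite
  haveI : Finite (Submodule K V) :=
    Finite.of_injective (fun W : Submodule K V => (W : Set V)) SetLike.coe_injective
  haveI := Fintype.ofFinite {W : Submodule K V // finrank K W = u}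
  set q := Fintype.card K
  set T := {s : Fin u → V // LinearIndependent K s} with hT
  haveI : Finite T := Subtype.finite
  haveI := Fintype.ofFinite T
  set f : T → {W : Submodule K V // finrank K W = u} := fun s =>
    ⟨Submodule.span K (Set.range s.1), by
      rw [finrank_span_eq_card s.2, Fintype.card_fin]⟩ with hf
  have hcardT : Nat.card T = ∑ W : {W : Submodule K V // finrank K W = u},
      Nat.card {s : T // f s = W} := by
    rw [Nat.card_congr (Equiv.sigmaFiberEquiv f).symm, Nat.card_eq_fintype_card,
      Fintype.card_sigma]
    refine Finset.sum_congr rfl fun W _ => ?_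
    rw [Nat.card_eq_fintype_card]
  have hfiber : ∀ W : {W : Submodule K V // finrank K W = u},
      Nat.card {s : T // f s = W} = alphaN q u u := by
    intro W
    haveI : Finite W.1 := Subtype.finite
    have hWfd : FiniteDimensional K W.1 := Module.Finite.of_finite
    have he : {s : T // f s = W} ≃ {s' : Fin u → W.1 // LinearIndependent K s'} := by
      refine ⟨fun s => ⟨fun j => ⟨s.1.1 j, ?_⟩, ?_⟩, fun s' => ⟨⟨fun j => (s'.1 j : V), ?_⟩, ?_⟩,
        ?_, ?_⟩
      · have : s.1.1 j ∈ Submodule.span K (Set.range s.1.1) :=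
          Submodule.subset_span (Set.mem_range_self j)
        have hw : Submodule.span K (Set.range s.1.1) = W.1 := congrArg Subtype.val s.2
        rwa [hw] at this
      · exact LinearIndependent.of_comp W.1.subtype (by convert s.1.2; rfl)
      · exact s'.2.map' W.1.subtype (Submodule.ker_subtype W.1)
      · apply Subtype.ext
        show Submodule.span K (Set.range fun j => (s'.1 j : V)) = W.1
        have : (Set.range fun j => (s'.1 j : V)) = W.1.subtype '' Set.range s'.1 := by
          rw [← Set.range_comp]; rfl
        rw [this, Submodule.span_image,
          s'.2.span_eq_top_of_card_eq_finrank' (by rw [Fintype.card_fin, W.2]),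
          Submodule.map_subtype_top]
      · intro s; apply Subtype.ext; apply Subtype.ext; rfl
      · intro s'; apply Subtype.ext; funext j; apply Subtype.ext; rfl
    rw [Nat.card_congr he, card_linearIndependent (by rw [W.2]), W.2, alphaN,
      Finset.prod_range fun i => q ^ u - q ^ i]
  have htot : ∑ W : {W : Submodule K V // finrank K W = u}, Nat.card {s : T // f s = W}
      = Nat.card {W : Submodule K V // finrank K W = u} * alphaN q u u := by
    rw [Finset.sum_congr rfl fun W _ => hfiber W, Finset.sum_const, Nat.card_eq_fintype_card,
      smul_eq_mul, Finset.card_univ]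
  have hcardTv : Nat.card T = alphaN q (finrank K V) u := by
    by_cases hud : u ≤ finrank K V
    · rw [hT, card_linearIndependent hud, alphaN, Finset.prod_range]
    · have hT0 : IsEmpty T := by
        constructor; rintro ⟨s, hs⟩
        exact hud (by simpa using hs.fintype_card_le_finrank)
      rw [Nat.card_of_isEmpty]
      simp only [alphaN]
      have hmem : finrank K V ∈ Finset.range u := Finset.mem_range.2 (by omega)
      refine (Finset.prod_eq_zero hmem ?_).symm
      exact Nat.sub_self _
  rw [← htot, ← hcardT, hcardTv]

lemma card_grass_real (K V : Type*) [Field K] [Fintype K] [AddCommGroup V] [Module K V]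
    [Finite V] (hq2 : 2 ≤ Fintype.card K) (u : ℕ) :
    (Nat.card {W : Submodule K V // finrank K W = u} : ℝ)
      = gaussR (Fintype.card K) (finrank K V) u := by
  have h := card_grass K V u
  have hα : (0:ℝ) < (alphaN (Fintype.card K) u u : ℝ) := by
    exact_mod_cast alphaN_pos _ _ _ hq2 le_rfl
  rw [gaussR, ← alphaN_cast _ _ _ hq2, ← alphaN_cast _ _ _ hq2, eq_div_iff (ne_of_gt hα)]
  exact_mod_cast h

lemma card_sub_grass (K V : Type*) [Field K] [AddCommGroup V] [Module K V]
    (P : Submodule K V) (u : ℕ) :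
    Nat.card {W : Submodule K V // finrank K W = u ∧ W ≤ P}
      = Nat.card {W' : Submodule K P // finrank K W' = u} := by
  refine (Nat.card_congr ?_).symm
  have e1 : {W' : Submodule K P // finrank K W' = u}
      ≃ {x : {p' : Submodule K V // p' ≤ P} // finrank K x.1 = u} :=
    (Submodule.MapSubtype.orderIso P).toEquiv.subtypeEquiv fun W' => by
      rw [show ((Submodule.MapSubtype.orderIso P).toEquiv W' : Submodule K V)
        = Submodule.map P.subtype W' from rfl, Submodule.finrank_map_subtype_eq]
  exact (e1.trans (Equiv.subtypeSubtypeEquivSubtypeInter (fun p' : Submodule K V => p' ≤ P)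
    (fun p' => finrank K p' = u))).trans (Equiv.subtypeEquivRight fun W => and_comm)

variable {K F : Type*} [Field K] [Field F] [Algebra K F] {n : ℕ}

/-- The pairing map `x ↦ ∑ x t • c t` as a `K`-linear map. -/
noncomputable def pairL (K : Type*) [Field K] [Algebra K F] (c : Fin n → F) :
    (Fin n → K) →ₗ[K] F where
  toFun x := ∑ t, x t • c t
  map_add' x y := by simp [add_smul, Finset.sum_add_distrib]
  map_smul' a x := by simp [mul_smul, Finset.smul_sum]

lemma pairL_apply (c : Fin n → F) (x : Fin n → K) : pairL K c x = ∑ t, x t • c t := rfl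

lemma range_pairL (c : Fin n → F) :
    LinearMap.range (pairL K c) = Submodule.span K (Set.range c) := by
  apply le_antisymm
  · rintro y ⟨x, rfl⟩
    rw [pairL_apply]
    exact Submodule.sum_smul_mem (Submodule.span K (Set.range c)) x
      fun t _ => Submodule.subset_span (Set.mem_range_self t)
  · rw [Submodule.span_le]
    rintro y ⟨t, rfl⟩
    exact ⟨Pi.single t 1, by simp [pairL_apply, Pi.single_apply, ite_smul]⟩

lemma finrank_ker_pairL [FiniteDimensional K F] (c : Fin n → F) :
    finrank K (LinearMap.ker (pairL K c)) = n - rk K c := by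
  have h := LinearMap.finrank_range_add_finrank_ker (pairL K (F := F) c)
  rw [range_pairL, Module.finrank_fintype_fun_eq_card, Fintype.card_fin] at h
  have hle : finrank K (Submodule.span K (Set.range c)) ≤ n := by
    calc finrank K (Submodule.span K (Set.range c))
        = finrank K (LinearMap.range (pairL K c)) := by rw [range_pairL]
      _ ≤ finrank K (Fin n → K) := LinearMap.finrank_range_le _
      _ = n := by rw [Module.finrank_fintype_fun_eq_card, Fintype.card_fin]
  rw [rk]
  omega
lemma card_vanishing (K F : Type*) [Field K] [Field F] [Algebra K F] [Fintype K] [Fintype F]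
    {n ν : ℕ} (C : Submodule F (Fin n → F))
    (hdual : ∀ v : Fin n → F, (∀ c ∈ C, ∑ t, v t * c t = 0) → v ≠ 0 → ν < rk K v)
    (W : Submodule K (Fin n → K)) (hW : Module.finrank K W = ν) :
    Nat.card {c : C // W ≤ LinearMap.ker (pairL K c.1)} * (Fintype.card F) ^ ν
      = (Fintype.card F) ^ (Module.finrank F C) ∧ ν ≤ Module.finrank F C := by
  classical
  haveI : FiniteDimensional K F := Module.Finite.of_finite
  haveI : Module.Finite K W := Module.Finite.of_finite
  -- a basis of W
  let b : Basis (Fin ν) K W := finBasisOfFinrankEq K W hW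
  let bb : Fin ν → (Fin n → K) := fun j => (b j : Fin n → K)
  have hbb_indep : LinearIndependent K bb :=
    b.linearIndependent.map' W.subtype (Submodule.ker_subtype W)
  -- the F-linear evaluation map
  let L : (Fin n → F) →ₗ[F] (Fin ν → F) :=
    { toFun := fun c j => ∑ t, algebraMap K F (bb j t) * c t
      map_add' := by intro x y; funext j; simp [mul_add, Finset.sum_add_distrib]
      map_smul' := by
        intro a c; funext j
        simp only [Pi.smul_apply, smul_eq_mul, RingHom.id_apply, Finset.mul_sum]
        exact Finset.sum_congr rfl fun t _ => by ring }
  have hLapp : ∀ (c : Fin n → F) (j : Fin ν), L c j = ∑ t, algebraMap K F (bb j t) * c t :=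
    fun c j => rfl
  have hpair_bb : ∀ (c : Fin n → F) (j : Fin ν), pairL K c (bb j) = L c j := by
    intro c j
    rw [pairL_apply, hLapp]
    exact Finset.sum_congr rfl fun t _ => (Algebra.smul_def _ _)
  -- membership characterization
  have hWspan : Submodule.span K (Set.range bb) = W := by
    have : Set.range bb = W.subtype '' Set.range b := by rw [← Set.range_comp]; rfl
    rw [this, Submodule.span_image, b.span_eq, Submodule.map_subtype_top]
  have hker_iff : ∀ c : C, (W ≤ LinearMap.ker (pairL K c.1)) ↔ L.comp C.subtype c = 0 := by
    intro c
    constructor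
    · intro h
      funext j
      have hj : bb j ∈ W := by rw [← hWspan]; exact Submodule.subset_span (Set.mem_range_self j)
      have := h hj
      rw [LinearMap.mem_ker, hpair_bb] at this
      exact this
    · intro h
      rw [← hWspan, Submodule.span_le]
      rintro x ⟨j, rfl⟩
      rw [SetLike.mem_coe, LinearMap.mem_ker, hpair_bb]
      exact congrFun h j
  -- surjectivity
  set L' := L.comp C.subtype with hL'
  have hsurj : LinearMap.range L' = ⊤ := by
    by_contra hne
    obtain ⟨f, hf0, hfker⟩ := Submodule.exists_dual_map_eq_bot_of_lt_top
      (lt_top_iff_ne_top.2 hne) inferInstance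
    set lam : Fin ν → F := fun j => f (fun i => if j = i then 1 else 0) with hlam
    have hf_eq : ∀ y : Fin ν → F, f y = ∑ j, y j • lam j := by
      intro y; rw [LinearMap.pi_apply_eq_sum_univ f y]
    set v : Fin n → F := fun t => ∑ j, (bb j t) • lam j with hv
    have hv_pair : ∀ c ∈ C, ∑ t, v t * c t = 0 := by
      intro c hc
      have h1 : ∑ t, v t * c t = ∑ j, (L c j) • lam j := by
        simp only [hv, Finset.sum_mul]
        rw [Finset.sum_comm]
        refine Finset.sum_congr rfl fun j _ => ?_
        rw [hLapp, smul_eq_mul, Finset.sum_mul]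
        refine Finset.sum_congr rfl fun t _ => ?_
        rw [Algebra.smul_def]
        ring
      rw [h1, ← hf_eq]
      have hLc : L c ∈ LinearMap.range L' := ⟨⟨c, hc⟩, rfl⟩
      have hmem : f (L c) ∈ Submodule.map f (LinearMap.range L') :=
        Submodule.mem_map_of_mem hLc
      rw [hfker] at hmem
      exact (Submodule.mem_bot F).1 hmem
    have hvne : v ≠ 0 := by
      intro hv0
      apply hf0
      let B := Module.finBasis K F
      have hcoord : ∀ s j, B.repr (lam j) s = 0 := by
        intro s
        have hsum : ∑ j, (fun j => B.repr (lam j) s) j • bb j = 0 := by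
          funext t
          have hvt : (0:F) = ∑ j, bb j t • lam j := (congrFun hv0 t).symm
          have := congrArg (fun z => B.repr z s) hvt
          simp only [map_zero, Finsupp.coe_zero, Pi.zero_apply, map_sum,
            Finsupp.coe_finset_sum, Finset.sum_apply, map_smul, Finsupp.coe_smul,
            Pi.smul_apply, smul_eq_mul] at this
          simp only [Finset.sum_apply, Pi.smul_apply, smul_eq_mul, Pi.zero_apply]
          simpa only [mul_comm] using this.symm
        exact Fintype.linearIndependent_iff.1 hbb_indep _ hsum
      have hlam0 : ∀ j, lam j = 0 := by
        intro j
        have : B.repr (lam j) = 0 := Finsupp.ext fun s => hcoord s j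
        exact (LinearEquiv.map_eq_zero_iff B.repr).1 this
      refine LinearMap.ext fun y => ?_
      rw [hf_eq]
      simp [hlam0]
    have hrk : rk K v ≤ ν := by
      have hle : Submodule.span K (Set.range v) ≤ Submodule.span K (Set.range lam) := by
        rw [Submodule.span_le]
        rintro x ⟨t, rfl⟩
        exact Submodule.sum_smul_mem (Submodule.span K (Set.range lam)) _
          fun j _ => Submodule.subset_span (Set.mem_range_self j)
      have h2 : finrank K (Submodule.span K (Set.range lam)) ≤ ν := by
        refine le_trans (finrank_span_le_card (Set.range lam)) ?_
        rw [Set.toFinset_range]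
        exact le_trans (Finset.card_image_le) (by simp)
      exact le_trans (Submodule.finrank_mono hle) h2
    exact absurd (hdual v hv_pair hvne) (by omega)
  -- cardinalities
  haveI : Module.Finite F C := Module.Finite.of_finite
  have hν_le : ν ≤ finrank F C := by
    have h := LinearMap.finrank_range_le L'
    rwa [hsurj, finrank_top, Module.finrank_fintype_fun_eq_card, Fintype.card_fin] at h
  have hcount : Nat.card {c : C // W ≤ LinearMap.ker (pairL K c.1)}
      = Nat.card (LinearMap.ker L') := by
    apply Nat.card_congr
    exact Equiv.subtypeEquivRight fun c => (hker_iff c).trans (LinearMap.mem_ker).symm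
  have hquot : Nat.card (C ⧸ LinearMap.ker L') = Fintype.card F ^ ν := by
    rw [Nat.card_congr (LinearMap.quotKerEquivOfSurjective L'
      (LinearMap.range_eq_top.1 hsurj)).toEquiv, Nat.card_eq_fintype_card,
      Fintype.card_fun, Fintype.card_fin]
  have hC : Nat.card C = Fintype.card F ^ (finrank F C) := by
    haveI := Fintype.ofFinite C
    rw [Nat.card_eq_fintype_card]
    exact card_eq_pow_finrank
  have htot := Submodule.card_eq_card_quotient_mul_card (LinearMap.ker L')
  rw [hC, hquot] at htot
  exact ⟨by rw [hcount, htot], hν_le⟩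

end RankMoments

open RankMoments Module

/-- if `C` is a `k`-dimensional linear code in `GF(q^m)^n` with rank
distribution `A_i`, and `0 ≤ ν ≤ n` is smaller than the minimum rank distance of the
dual code `C^⊥`, then `Σ_{i=0}^{n-ν} [n-i,ν]_q A_i = q^{m(k-ν)} [n,ν]_q`. -/
theorem rank_distribution_moments_below_dual_distance (q m n k : ℕ) (hq : IsPrimePow q)
    (hm : 0 < m) (hn : 0 < n)
    (K F : Type*) [Field K] [Field F] [Algebra K F] [Fintype K] [Fintype F]
    (hK : Fintype.card K = q) (hF : Fintype.card F = q ^ m)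
    (C : Submodule F (Fin n → F)) (hCk : Module.finrank F C = k)
    (ν : ℕ) (hν : ν ≤ n)
    (hdual : ∀ v : Fin n → F, (∀ c ∈ C, ∑ t, v t * c t = 0) → v ≠ 0 → ν < rk K v) :
    ∑ i ∈ Finset.range (n - ν + 1),
        gaussR (q : ℝ) (n - i) ν * (Nat.card {c : Fin n → F // c ∈ C ∧ rk K c = i} : ℝ) =
      (q : ℝ) ^ ((m : ℤ) * ((k : ℤ) - (ν : ℤ))) * gaussR (q : ℝ) n ν := by
  classical
  have hq2 : 2 ≤ q := hq.two_le
  have hq2' : 2 ≤ Fintype.card K := by rw [hK]; exact hq2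
  haveI : FiniteDimensional K F := Module.Finite.of_finite
  haveI : Finite (Submodule K (Fin n → K)) :=
    Finite.of_injective (fun W : Submodule K (Fin n → K) => (W : Set (Fin n → K)))
      SetLike.coe_injective
  haveI := Fintype.ofFinite (Submodule K (Fin n → K))
  haveI := Fintype.ofFinite C
  haveI : Module.Finite F C := Module.Finite.of_finite
  -- rank is at most n
  have hrk_le : ∀ c : Fin n → F, rk K c ≤ n := by
    intro c
    refine le_trans (finrank_span_le_card (Set.range c)) ?_
    rw [Set.toFinset_range]
    exact le_trans Finset.card_image_le (by simp)
  -- rank distribution as filter cardinalities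
  have hA : ∀ i : ℕ, (Nat.card {c : Fin n → F // c ∈ C ∧ rk K c = i})
      = (Finset.univ.filter fun c : C => rk K (c : Fin n → F) = i).card := by
    intro i
    rw [Nat.card_congr (Equiv.subtypeSubtypeEquivSubtypeInter (fun c : Fin n → F => c ∈ C)
      (fun c => rk K c = i)).symm, Nat.card_eq_fintype_card, Fintype.card_subtype]
  -- per-codeword subspace count
  have hperc : ∀ c : Fin n → F,
      (Nat.card {W : Submodule K (Fin n → K) //
          finrank K W = ν ∧ W ≤ LinearMap.ker (pairL K c)} : ℝ)
        = gaussR (q : ℝ) (n - rk K c) ν := by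
    intro c
    rw [card_sub_grass, card_grass_real K _ hq2' ν, finrank_ker_pairL, hK]
  -- existence of a ν-dimensional subspace, and ν ≤ k
  have hGr_ne : Nat.card {W : Submodule K (Fin n → K) // finrank K W = ν} ≠ 0 := by
    have h := card_grass K (Fin n → K) ν
    rw [Module.finrank_fintype_fun_eq_card, Fintype.card_fin] at h
    have hpos := alphaN_pos (Fintype.card K) n ν hq2' hν
    intro h0
    rw [h0, zero_mul] at h
    omega
  have hνk : ν ≤ k := by
    obtain ⟨W0⟩ := (Nat.card_ne_zero.1 hGr_ne).1
    have := (card_vanishing K F C hdual W0.1 W0.2).2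
    rwa [hCk] at this
  -- the per-subspace codeword count
  have hW_val : ∀ W : Submodule K (Fin n → K),
      (Finset.univ.filter fun c : C =>
          finrank K W = ν ∧ W ≤ LinearMap.ker (pairL K (c : Fin n → F))).card
        = if finrank K W = ν then q ^ (m * (k - ν)) else 0 := by
    intro W
    by_cases hWν : finrank K W = ν
    · rw [if_pos hWν]
      have h := (card_vanishing K F C hdual W hWν).1
      rw [hF, hCk] at h
      have hcard : (Finset.univ.filter fun c : C =>
          finrank K W = ν ∧ W ≤ LinearMap.ker (pairL K (c : Fin n → F))).card
          = Nat.card {c : C // W ≤ LinearMap.ker (pairL K (c : Fin n → F))} := by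
        rw [Nat.card_eq_fintype_card, Fintype.card_subtype]
        congr 1
        apply Finset.filter_congr
        intro c _
        simp [hWν]
      rw [hcard]
      have hpow : (q ^ m) ^ k = q ^ (m * (k - ν)) * (q ^ m) ^ ν := by
        rw [← pow_mul, ← pow_mul, ← pow_add]
        congr 1
        rw [Nat.mul_sub]
        have := Nat.mul_le_mul_left m hνk
        omega
      have hpos : 0 < (q ^ m) ^ ν := by positivity
      exact Nat.eq_of_mul_eq_mul_right hpos (by rw [h, hpow])
    · rw [if_neg hWν, Finset.card_eq_zero]
      apply Finset.filter_eq_empty_iff.2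
      intro c _
      simp [hWν]
  -- assemble
  have hsub : Finset.range (n - ν + 1) ⊆ Finset.range (n + 1) :=
    Finset.range_subset_range.2 (by omega)
  calc ∑ i ∈ Finset.range (n - ν + 1),
        gaussR (q : ℝ) (n - i) ν * (Nat.card {c : Fin n → F // c ∈ C ∧ rk K c = i} : ℝ)
      = ∑ i ∈ Finset.range (n + 1), gaussR (q : ℝ) (n - i) ν *
          ((Finset.univ.filter fun c : C => rk K (c : Fin n → F) = i).card : ℝ) := by
        rw [Finset.sum_congr rfl fun i _ => by rw [hA i]]
        refine Finset.sum_subset hsub fun i hi1 hi2 => ?_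
        have h1 := Finset.mem_range.1 hi1
        have h2 : ¬ i < n - ν + 1 := fun h => hi2 (Finset.mem_range.2 h)
        rw [gaussR_eq_zero _ _ _ (by omega), zero_mul]
    _ = ∑ c : C, gaussR (q : ℝ) (n - rk K (c : Fin n → F)) ν := by
        rw [← Finset.sum_fiberwise_of_maps_to (g := fun c : C => rk K (c : Fin n → F)) (t := Finset.range (n+1))
          (fun (c : C) _ => Finset.mem_range.2 (Nat.lt_succ_of_le (hrk_le (c : Fin n → F))))
          (fun c : C => gaussR (q : ℝ) (n - rk K (c : Fin n → F)) ν)]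
        refine Finset.sum_congr rfl fun i _ => ?_
        rw [Finset.sum_congr rfl fun c hc => by rw [(Finset.mem_filter.1 hc).2],
          Finset.sum_const, nsmul_eq_mul, mul_comm]
    _ = ∑ c : C, (Nat.card {W : Submodule K (Fin n → K) //
          finrank K W = ν ∧ W ≤ LinearMap.ker (pairL K (c : Fin n → F))} : ℝ) := by
        refine Finset.sum_congr rfl fun c _ => ?_
        rw [hperc]
    _ = ((∑ c : C, (Finset.univ.filter fun W : Submodule K (Fin n → K) =>
          finrank K W = ν ∧ W ≤ LinearMap.ker (pairL K (c : Fin n → F))).card : ℕ) : ℝ) := by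
        push_cast
        refine Finset.sum_congr rfl fun c _ => ?_
        rw [Nat.card_eq_fintype_card, Fintype.card_subtype]
    _ = ((∑ W : Submodule K (Fin n → K), (Finset.univ.filter fun c : C =>
          finrank K W = ν ∧ W ≤ LinearMap.ker (pairL K (c : Fin n → F))).card : ℕ) : ℝ) := by
        congr 1
        simp only [Finset.card_filter]
        rw [Finset.sum_comm]
    _ = ((Nat.card {W : Submodule K (Fin n → K) // finrank K W = ν}
          * q ^ (m * (k - ν)) : ℕ) : ℝ) := by
        congr 1
        rw [Finset.sum_congr rfl fun W _ => hW_val W, ← Finset.sum_filter,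
          Finset.sum_const, smul_eq_mul, Nat.card_eq_fintype_card, Fintype.card_subtype]
    _ = (q : ℝ) ^ ((m : ℤ) * ((k : ℤ) - (ν : ℤ))) * gaussR (q : ℝ) n ν := by
        push_cast
        have hgr := card_grass_real K (Fin n → K) hq2' ν
        rw [Module.finrank_fintype_fun_eq_card, Fintype.card_fin, hK] at hgr
        rw [hgr]
        rw [show ((m:ℤ) * ((k:ℤ) - (ν:ℤ))) = ((m * (k - ν) : ℕ) : ℤ) by
          push_cast [Nat.cast_sub hνk]; ring, zpow_natCast]
        push_cast
        ring
end

section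
/- (MacWilliams identity for the Hamming metric.) Let C be a k-dimensional GF(q^m)-linear subspace of GF(q^m)^n with Hamming weight distribution A_i = #{c ∈ C : w_H(c) = i}, and let B_j = #{c ∈ C^⊥ : w_H(c) = j} be the Hamming weight distribution of its dual code. Then for all real numbers x and y, Σ_{j=0}^{n} B_j y^j x^{n−j} = q^{−mk} · Σ_{i=0}^{n} A_i (x−y)^i (x+(q^m−1)y)^{n−i}. -/
open Finset

/-- The Hamming weight of a vector: the number of nonzero coordinates. -/
def wH {n : ℕ} {F : Type*} [DecidableEq F] [Zero F] (v : Fin n → F) : ℕ :=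
  (Finset.univ.filter fun t => v t ≠ 0).card

section Aux

variable {n : ℕ} {F : Type*} [Field F] [Fintype F] [DecidableEq F]

lemma wH_le (v : Fin n → F) : wH v ≤ n := by
  simpa [wH] using Finset.card_filter_le Finset.univ fun t => v t ≠ 0

lemma card_filter_eq_zero (v : Fin n → F) :
    (Finset.univ.filter fun t => v t = 0).card = n - wH v := by
  have h := Finset.card_filter_add_card_filter_not
    (s := (Finset.univ : Finset (Fin n))) (p := fun t => v t = 0)
  have h2 : (Finset.univ.filter fun t => ¬ v t = 0).card = wH v := rfl
  simp only [Finset.card_univ, Fintype.card_fin] at h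
  omega

lemma prod_ite_wH {E : Type*} [CommRing E] (v : Fin n → F) (a b : E) :
    (∏ t, if v t = 0 then a else b) = b ^ wH v * a ^ (n - wH v) := by
  rw [Finset.prod_ite, Finset.prod_const, Finset.prod_const, card_filter_eq_zero]
  have h2 : (Finset.univ.filter fun t => ¬ v t = 0).card = wH v := rfl
  rw [h2, mul_comm]

lemma addChar_map_sum {ι A M : Type*} [AddCommMonoid A] [CommMonoid M]
    (χ : AddChar A M) (s : Finset ι) (f : ι → A) :
    χ (∑ i ∈ s, f i) = ∏ i ∈ s, χ (f i) := by
  induction s using Finset.cons_induction with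
  | empty => simp
  | cons a s ha ih => rw [Finset.sum_cons, Finset.prod_cons, AddChar.map_add_eq_mul, ih]

variable {E : Type*} [Field E]

/-- Per-vector Fourier transform computation. -/
lemma fourier_step (χ : AddChar F E) (hχ : χ.IsPrimitive) (X Y : E) (u : Fin n → F) :
    ∑ v : Fin n → F, χ (∑ t, v t * u t) * (Y ^ wH v * X ^ (n - wH v)) =
      (X - Y) ^ wH u * (X + ((Fintype.card F : E) - 1) * Y) ^ (n - wH u) := by
  classical
  have step1 : ∀ v : Fin n → F, χ (∑ t, v t * u t) * (Y ^ wH v * X ^ (n - wH v))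
      = ∏ t, (χ (v t * u t) * (if v t = 0 then X else Y)) := by
    intro v
    rw [Finset.prod_mul_distrib, ← addChar_map_sum, prod_ite_wH]
  simp_rw [step1]
  rw [← Fintype.prod_sum (fun (t : Fin n) (a : F) => χ (a * u t) * (if a = 0 then X else Y))]
  have coord : ∀ t : Fin n, (∑ a : F, χ (a * u t) * (if a = 0 then X else Y))
      = if u t = 0 then X + ((Fintype.card F : E) - 1) * Y else X - Y := by
    intro t
    have h1 : ∀ a : F, χ (a * u t) * (if a = 0 then X else Y)
        = χ (a * u t) * Y + (if a = 0 then X - Y else 0) := by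
      intro a
      by_cases h : a = 0
      · simp only [h, if_pos, mul_zero, zero_mul, AddChar.map_zero_eq_one, if_true, one_mul]
        ring
      · simp [h]
    simp_rw [h1, Finset.sum_add_distrib, ← Finset.sum_mul]
    rw [AddChar.sum_mulShift _ hχ, Finset.sum_ite_eq' Finset.univ (0 : F)]
    by_cases h : u t = 0
    · simp [h]; ring
    · simp [h]
  simp_rw [coord]
  rw [Finset.prod_ite, Finset.prod_const, Finset.prod_const, card_filter_eq_zero]
  have h2 : (Finset.univ.filter fun t => ¬ u t = 0).card = wH u := rfl
  rw [h2, mul_comm]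

/-- Orthogonality: the character sum over the code vanishes off the dual code. -/
lemma orth_step (χ : AddChar F E) (hχ : χ ≠ 1) (C : Submodule F (Fin n → F)) [Fintype C]
    (v : Fin n → F) (hv : ¬ ∀ c ∈ C, ∑ t, v t * c t = 0) :
    ∑ c : C, χ (∑ t, v t * (c : Fin n → F) t) = 0 := by
  push_neg at hv
  obtain ⟨c₀, hc₀C, hc₀⟩ := hv
  let ℓ : C →ₗ[F] F :=
  { toFun := fun c => ∑ t, v t * (c : Fin n → F) t
    map_add' := fun a b => by
      simp [mul_add, Finset.sum_add_distrib]
    map_smul' := fun r a => by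
      simp only [SetLike.val_smul, Pi.smul_apply, smul_eq_mul, RingHom.id_apply,
        Finset.mul_sum]
      exact Finset.sum_congr rfl fun t _ => by ring }
  obtain ⟨a, ha⟩ := AddChar.ne_one_iff.mp hχ
  set s₀ : F := ∑ t, v t * c₀ t with hs₀
  have hℓ : ℓ ⟨c₀, hc₀C⟩ = s₀ := rfl
  set ψ : AddChar C E := χ.compAddMonoidHom ℓ.toAddMonoidHom with hψdef
  have hψ : ψ ≠ 1 := by
    rw [AddChar.ne_one_iff]
    refine ⟨(a * s₀⁻¹) • ⟨c₀, hc₀C⟩, ?_⟩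
    have hval : ℓ ((a * s₀⁻¹) • ⟨c₀, hc₀C⟩) = a := by
      rw [map_smul, hℓ, smul_eq_mul]
      field_simp
    have : ψ ((a * s₀⁻¹) • ⟨c₀, hc₀C⟩) = χ a := by
      rw [hψdef, AddChar.compAddMonoidHom_apply, LinearMap.toAddMonoidHom_coe, hval]
    rw [this]; exact ha
  have hsum := AddChar.sum_eq_zero_of_ne_one hψ
  have hsum' : ∑ a : C, χ (ℓ a) = 0 := by simpa [hψdef] using hsum
  exact hsum'

/-- Grouping a sum over a subtype by Hamming weight. -/
lemma group_by_weight (p : (Fin n → F) → Prop) [DecidablePred p] (h : ℕ → E) :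
    ∑ j ∈ Finset.range (n + 1), (Nat.card {v : Fin n → F // p v ∧ wH v = j} : E) * h j
      = ∑ v : {v : Fin n → F // p v}, h (wH v.1) := by
  classical
  rw [← Finset.sum_fiberwise_of_maps_to (g := fun v : {v : Fin n → F // p v} => wH v.1)
      (t := Finset.range (n + 1))
      (fun v _ => Finset.mem_range.mpr (Nat.lt_succ_of_le (wH_le v.1)))
      (fun v => h (wH v.1))]
  refine Finset.sum_congr rfl fun j hj => ?_
  have hcard : (Finset.univ.filter fun v : {v : Fin n → F // p v} => wH v.1 = j).card
      = Nat.card {v : Fin n → F // p v ∧ wH v = j} := by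
    rw [Nat.card_eq_fintype_card, ← Fintype.card_subtype]
    exact Fintype.card_congr
      (Equiv.subtypeSubtypeEquivSubtypeInter p (fun v => wH v = j))
  calc (Nat.card {v : Fin n → F // p v ∧ wH v = j} : E) * h j
      = ∑ _v ∈ Finset.univ.filter fun v : {v : Fin n → F // p v} => wH v.1 = j, h j := by
        rw [Finset.sum_const, hcard, nsmul_eq_mul]
    _ = ∑ v ∈ Finset.univ.filter fun v : {v : Fin n → F // p v} => wH v.1 = j, h (wH v.1) := by
        refine Finset.sum_congr rfl fun v hv => ?_
        rw [(Finset.mem_filter.mp hv).2]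

end Aux

set_option maxHeartbeats 2000000 in
/-- MacWilliams identity for the Hamming metric: if `C` is a
`k`-dimensional linear code in `GF(q^m)^n` with Hamming weight distribution `A_i`, and
`B_j` is the Hamming weight distribution of its dual code, then for all real `x, y`,
`Σ_{j=0}^n B_j y^j x^{n-j} = q^{-mk} Σ_{i=0}^n A_i (x-y)^i (x+(q^m-1)y)^{n-i}`. -/
theorem macwilliams_hamming_metric (q m n k : ℕ) (hq : IsPrimePow q)
    (hm : 0 < m) (hn : 0 < n)
    (F : Type*) [Field F] [Fintype F] [DecidableEq F] (hF : Fintype.card F = q ^ m)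
    (C : Submodule F (Fin n → F)) (hCk : Module.finrank F C = k)
    (x y : ℝ) :
    ∑ j ∈ Finset.range (n + 1),
        (Nat.card {v : Fin n → F // (∀ c ∈ C, ∑ t, v t * c t = 0) ∧ wH v = j} : ℝ) *
          y ^ j * x ^ (n - j) =
      ((q : ℝ) ^ (m * k))⁻¹ *
        ∑ i ∈ Finset.range (n + 1),
          (Nat.card {c : Fin n → F // c ∈ C ∧ wH c = i} : ℝ) *
            (x - y) ^ i * (x + ((q : ℝ) ^ m - 1) * y) ^ (n - i) := by
  classical
  -- a nontrivial additive character of F with values in a field E of characteristic 0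
  have hring : ringChar ℂ ≠ ringChar F := by
    have hp : (ringChar F).Prime := CharP.char_is_prime F _
    rw [ringChar.eq_zero (R := ℂ)]
    exact fun h => hp.ne_zero h.symm
  let Ψ := AddChar.FiniteField.primitiveChar F ℂ hring
  set E := CyclotomicField Ψ.n ℂ with hE
  let χ : AddChar F E := Ψ.char
  have hχprim : χ.IsPrimitive := Ψ.prim
  have hχ1 : χ ≠ 1 := by
    have := hχprim (one_ne_zero (α := F))
    rwa [AddChar.mulShift_one] at this
  -- embedding of ℝ into E
  let φ : ℝ →+* E := (algebraMap ℂ E).comp (algebraMap ℝ ℂ)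
  have hφinj : Function.Injective φ := φ.injective
  set X : E := φ x with hX
  set Y : E := φ y with hY
  set P : (Fin n → F) → Prop := fun v => ∀ c ∈ C, ∑ t, v t * c t = 0 with hP
  set f : (Fin n → F) → E := fun v => Y ^ wH v * X ^ (n - wH v) with hf
  set g : (Fin n → F) → E := fun c =>
    (X - Y) ^ wH c * (X + ((q : E) ^ m - 1) * Y) ^ (n - wH c) with hg
  have hcardF : (Fintype.card F : E) = (q : E) ^ m := by rw [hF]; push_cast; ring
  -- core identity via Fourier + orthogonality
  have core : ∑ c : C, g (c : Fin n → F)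
      = (Fintype.card C : E) * ∑ v : {v : Fin n → F // P v}, f v.1 := by
    have step1 : ∀ c : C, g (c : Fin n → F)
        = ∑ v : Fin n → F, χ (∑ t, v t * (c : Fin n → F) t) * f v := by
      intro c
      simp only [hg]
      rw [← hcardF]
      exact (fourier_step χ hχprim X Y (c : Fin n → F)).symm
    calc ∑ c : C, g (c : Fin n → F)
        = ∑ c : C, ∑ v : Fin n → F, χ (∑ t, v t * (c : Fin n → F) t) * f v :=
          Finset.sum_congr rfl fun c _ => step1 c
      _ = ∑ v : Fin n → F, (∑ c : C, χ (∑ t, v t * (c : Fin n → F) t)) * f v := by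
          rw [Finset.sum_comm]
          exact Finset.sum_congr rfl fun v _ => (Finset.sum_mul _ _ _).symm
      _ = ∑ v : Fin n → F, (if P v then (Fintype.card C : E) else 0) * f v := by
          refine Finset.sum_congr rfl fun v _ => ?_
          congr 1
          by_cases hv : P v
          · rw [if_pos hv]
            have h1 : ∀ c : C, χ (∑ t, v t * (c : Fin n → F) t) = 1 := by
              intro c
              rw [hv (c : Fin n → F) c.2, AddChar.map_zero_eq_one]
            rw [Finset.sum_congr rfl fun c _ => h1 c]
            simp
          · rw [if_neg hv]
            exact orth_step χ hχ1 C v hv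
      _ = (Fintype.card C : E) * ∑ v : {v : Fin n → F // P v}, f v.1 := by
          simp_rw [ite_mul, zero_mul]
          rw [Finset.sum_ite]
          simp_rw [Finset.sum_const_zero, add_zero,
            ← Finset.mul_sum]
          congr 1
          exact Finset.sum_subtype (p := P) (Finset.univ.filter P)
            (fun v => by simp [Finset.mem_filter]) f
  -- cardinalities
  have hcardC : (Fintype.card C : E) = (q : E) ^ (m * k) := by
    have h1 : Fintype.card C = Fintype.card F ^ Module.finrank F C :=
      Module.card_eq_pow_finrank (K := F) (V := C)
    rw [h1, hCk, hF, ← pow_mul]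
    push_cast
    ring
  have hq0 : (q : E) ≠ 0 := by
    have : (q : ℝ) ≠ 0 := Nat.cast_ne_zero.mpr hq.pos.ne'
    intro h
    apply this
    apply hφinj
    rw [map_natCast, map_zero, h]
  have hqk0 : (q : E) ^ (m * k) ≠ 0 := pow_ne_zero _ hq0
  -- the identity rearranged
  have key : ∑ v : {v : Fin n → F // P v}, f v.1
      = ((q : E) ^ (m * k))⁻¹ * ∑ c : C, g (c : Fin n → F) := by
    rw [eq_inv_mul_iff_mul_eq₀ hqk0, ← hcardC, core.symm]
  -- transfer to ℝ via φ
  apply hφinj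
  have hLHS : φ (∑ j ∈ Finset.range (n + 1),
        (Nat.card {v : Fin n → F // (∀ c ∈ C, ∑ t, v t * c t = 0) ∧ wH v = j} : ℝ) *
          y ^ j * x ^ (n - j))
      = ∑ v : {v : Fin n → F // P v}, f v.1 := by
    rw [map_sum]
    rw [← group_by_weight P (fun j => Y ^ j * X ^ (n - j))]
    refine Finset.sum_congr rfl fun j _ => ?_
    rw [map_mul, map_mul, map_natCast, map_pow, map_pow, ← hX, ← hY, mul_assoc]
  have hRHS : φ (((q : ℝ) ^ (m * k))⁻¹ *
        ∑ i ∈ Finset.range (n + 1),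
          (Nat.card {c : Fin n → F // c ∈ C ∧ wH c = i} : ℝ) *
            (x - y) ^ i * (x + ((q : ℝ) ^ m - 1) * y) ^ (n - i))
      = ((q : E) ^ (m * k))⁻¹ * ∑ c : C, g (c : Fin n → F) := by
    simp only [hg]
    rw [map_mul, map_inv₀, map_pow, map_natCast]
    congr 1
    rw [map_sum]
    have hgrp := group_by_weight (fun c => c ∈ C)
      (fun i => (X - Y) ^ i * (X + ((q : E) ^ m - 1) * Y) ^ (n - i)) (E := E)
    rw [← hgrp]
    refine Finset.sum_congr rfl fun i _ => ?_
    rw [map_mul, map_mul, map_natCast, map_pow, map_pow, mul_assoc]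
    congr 2
    · rw [map_sub, ← hX, ← hY]
    · rw [map_add, map_mul, map_sub, map_pow, map_one, map_natCast, ← hX, ← hY]
  rw [hLHS, hRHS, key]
end
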